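/- arXiv:1701.04954 — 8 statements merged into one kernel-verified Lean document; each statement's English description precedes it below -/
import Mathlib

section
/- Let m, L, d be positive integers, let 0 ≤ w_s ≤ L, and set v = min{w_s, L−w_s}. Let D be the sum, over all m-tuples (u_1,…,u_m) of integers satisfying 0 ≤ u_i ≤ v for all i and 2(u_1+⋯+u_m) ≤ d−1, of ∏_{i=1}^m C(w_s,u_i)·C(L−w_s,u_i), where C(a,b) denotes the binomial coefficient. Then C(m,L,d,w_s) ≥ C(L,w_s)^m / D; that is, there exists an (m,L,d,w_s)-CSCC whose size is at least C(L,w_s)^m / D. -/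
open Finset Filter

/-- Weight (number of ones) of a binary word. -/
def wt {n : ℕ} (x : Fin n → Bool) : ℕ := (Finset.univ.filter fun i => x i = true).card

/-- The index (in a word of length `m * L`) of position `j` of subblock `i`. -/
def subIdx (m L : ℕ) (i : Fin m) (j : Fin L) : Fin (m * L) :=
  ⟨i.val * L + j.val, by
    have hj : j.val < L := j.isLt
    have hi : i.val + 1 ≤ m := i.isLt
    calc i.val * L + j.val < i.val * L + L := Nat.add_lt_add_left hj _
      _ = (i.val + 1) * L := by ring
      _ ≤ m * L := Nat.mul_le_mul hi (Nat.le_refl L)⟩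

/-- The `i`-th subblock (of length `L`) of a binary word of length `m * L`. -/
def subblock (m L : ℕ) (x : Fin (m * L) → Bool) (i : Fin m) : Fin L → Bool :=
  fun j => x (subIdx m L i j)

/-- The CSCC space: binary words of length `m * L` each of whose `m` subblocks of
length `L` has weight exactly `w`. -/
def CSCCspace (m L w : ℕ) : Set (Fin (m * L) → Bool) :=
  {x | ∀ i : Fin m, wt (subblock m L x i) = w}

/-- The SECC space: binary words of length `m * L` each of whose `m` subblocks of
length `L` has weight at least `w`. -/
def SECCspace (m L w : ℕ) : Set (Fin (m * L) → Bool) :=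
  {x | ∀ i : Fin m, w ≤ wt (subblock m L x i)}

/-- A code with minimum distance `d` inside the space `Sp`. -/
def isCode {n : ℕ} (Sp : Set (Fin n → Bool)) (d : ℕ) (C : Finset (Fin n → Bool)) : Prop :=
  (↑C : Set (Fin n → Bool)) ⊆ Sp ∧ ∀ x ∈ C, ∀ y ∈ C, x ≠ y → d ≤ hammingDist x y

/-- The ball of radius `t` around `x`, taken inside the space `Sp`. -/
def ball {n : ℕ} (Sp : Set (Fin n → Bool)) (x : Fin n → Bool) (t : ℕ) :
    Set (Fin n → Bool) :=
  {y | y ∈ Sp ∧ hammingDist x y ≤ t}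

/-- `C(m,L,d,w)`: the maximum size of an `(m,L,d,w)`-CSCC. -/
noncomputable def maxCSCC (m L d w : ℕ) : ℕ :=
  sSup {k | ∃ C : Finset (Fin (m * L) → Bool), isCode (CSCCspace m L w) d C ∧ C.card = k}

/-- `S(m,L,d,w)`: the maximum size of an `(m,L,d,w)`-SECC. -/
noncomputable def maxSECC (m L d w : ℕ) : ℕ :=
  sSup {k | ∃ C : Finset (Fin (m * L) → Bool), isCode (SECCspace m L w) d C ∧ C.card = k}

/-- `A(n,d,w)`: the maximum size of a constant weight code. -/
noncomputable def maxCWC (n d w : ℕ) : ℕ :=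
  sSup {k | ∃ C : Finset (Fin n → Bool), isCode {x | wt x = w} d C ∧ C.card = k}

/-- `H(n,d,w)`: the maximum size of a heavy weight code. -/
noncomputable def maxHWC (n d w : ℕ) : ℕ :=
  sSup {k | ∃ C : Finset (Fin n → Bool), isCode {x | w ≤ wt x} d C ∧ C.card = k}

/-- `A(n,d)`: the maximum size of a binary code of length `n` and distance `d`. -/
noncomputable def maxBinary (n d : ℕ) : ℕ :=
  sSup {k | ∃ C : Finset (Fin n → Bool),
    (∀ x ∈ C, ∀ y ∈ C, x ≠ y → d ≤ hammingDist x y) ∧ C.card = k}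

/-- `A_q(n,d)`: the maximum size of a `q`-ary code of length `n` and distance `d`. -/
noncomputable def maxQary (q n d : ℕ) : ℕ :=
  sSup {k | ∃ C : Finset (Fin n → Fin q),
    (∀ x ∈ C, ∀ y ∈ C, x ≠ y → d ≤ hammingDist x y) ∧ C.card = k}

/-- The size of a radius-`r` CSCC ball: the sum over all tuples `(u_1, …, u_m)` with
`0 ≤ u_i ≤ min{w, L-w}` and `2(u_1 + ⋯ + u_m) ≤ r` of `∏ i, C(w,u_i)·C(L-w,u_i)`. -/
def csccBallSize (m L w r : ℕ) : ℕ :=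
  ∑ u ∈ (Finset.univ : Finset (Fin m → Fin (min w (L - w) + 1))).filter
      (fun u => 2 * (∑ i, (u i : ℕ)) ≤ r),
    ∏ i, (w.choose (u i : ℕ)) * ((L - w).choose (u i : ℕ))

/-- The binary entropy function (base-2 logarithms, `h 0 = h 1 = 0`). -/
noncomputable def binent (p : ℝ) : ℝ :=
  -(p * Real.logb 2 p) - (1 - p) * Real.logb 2 (1 - p)

/-- The asymptotic CSCC rate `γ(L,δ,w/L)`. -/
noncomputable def gammaRate (L : ℕ) (δ : ℝ) (w : ℕ) : ℝ :=
  Filter.limsup (fun m : ℕ =>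
    Real.logb 2 (maxCSCC m L ⌊(m : ℝ) * L * δ⌋₊ w) / ((m : ℝ) * L)) Filter.atTop

/-- The asymptotic SECC rate `σ(L,δ,w/L)`. -/
noncomputable def sigmaRate (L : ℕ) (δ : ℝ) (w : ℕ) : ℝ :=
  Filter.limsup (fun m : ℕ =>
    Real.logb 2 (maxSECC m L ⌊(m : ℝ) * L * δ⌋₊ w) / ((m : ℝ) * L)) Filter.atTop
lemma wt_card (L w : ℕ) : ((univ : Finset (Fin L → Bool)).filter fun a => wt a = w).card = L.choose w := by
  have h : L.choose w = (Finset.powersetCard w (univ : Finset (Fin L))).card := by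
    rw [Finset.card_powersetCard]; simp
  rw [h]
  refine Finset.card_bij' (fun a _ => univ.filter fun j => a j = true)
      (fun s _ => fun j => decide (j ∈ s)) ?_ ?_ ?_ ?_
  · intro a ha
    simp only [mem_filter, mem_univ, true_and] at ha
    simpa [Finset.mem_powersetCard, wt] using ha
  · intro s hs
    simp only [Finset.mem_powersetCard] at hs
    rw [mem_filter]; refine ⟨mem_univ _, ?_⟩; unfold wt
    rw [← hs.2]; congr 1; ext j; simp
  · intro a _; funext j; simp
  · intro s _; ext j; simp

def blockEquiv (m L : ℕ) (hL : 0 < L) : (Fin m × Fin L) ≃ Fin (m * L) where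
  toFun p := subIdx m L p.1 p.2
  invFun k := (⟨k.val / L, by
      have := k.isLt
      exact (Nat.div_lt_iff_lt_mul hL).mpr this⟩,
    ⟨k.val % L, Nat.mod_lt _ hL⟩)
  left_inv := by
    rintro ⟨i, j⟩
    have hj : j.val < L := j.isLt
    simp only [subIdx]
    have h1 : (i.val * L + j.val) / L = i.val := by
      rw [add_comm, Nat.add_mul_div_right _ _ hL, Nat.div_eq_of_lt hj]; omega
    have h2 : (i.val * L + j.val) % L = j.val := by
      rw [add_comm, Nat.add_mul_mod_self_right, Nat.mod_eq_of_lt hj]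
    ext <;> simp [h1, h2]
  right_inv := by
    rintro ⟨k, hk⟩
    simp only [subIdx]
    ext
    simp only
    rw [mul_comm]; exact Nat.div_add_mod k L

lemma card_filter_equiv {α β : Type*} [Fintype α] [Fintype β] (e : α ≃ β) (p : β → Prop)
    [DecidablePred p] :
    ((univ : Finset α).filter fun a => p (e a)).card = ((univ : Finset β).filter p).card := by
  refine Finset.card_bij' (fun a _ => e a) (fun b _ => e.symm b) ?_ ?_ ?_ ?_ <;>
    simp [Finset.mem_filter]

lemma card_filter_prod {α β : Type*} [Fintype α] [Fintype β] (P : α × β → Prop)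
    [DecidablePred P] :
    ((univ : Finset (α × β)).filter P).card = ∑ a : α, ((univ : Finset β).filter fun b => P (a, b)).card := by
  rw [Finset.card_filter, Fintype.sum_prod_type]
  exact Finset.sum_congr rfl fun a _ => (Finset.card_filter _ _).symm

lemma hamming_sum (m L : ℕ) (hL : 0 < L) (x y : Fin (m * L) → Bool) :
    hammingDist x y = ∑ i, hammingDist (subblock m L x i) (subblock m L y i) := by
  simp only [hammingDist]
  rw [← card_filter_equiv (blockEquiv m L hL) (fun k => x k ≠ y k), card_filter_prod]
  rfl

section blocks
variable {L : ℕ}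

def Aset (a b : Fin L → Bool) : Finset (Fin L) := univ.filter fun j => a j = true ∧ b j = false
def Bset (a b : Fin L → Bool) : Finset (Fin L) := univ.filter fun j => a j = false ∧ b j = true

lemma dist_split (a b : Fin L → Bool) :
    hammingDist a b = (Aset a b).card + (Bset a b).card := by
  simp only [hammingDist, Aset, Bset, Finset.card_filter]
  rw [← Finset.sum_add_distrib]
  refine Finset.sum_congr rfl fun j _ => ?_
  cases hja : a j <;> cases hjb : b j <;> simp

lemma wtA (a b : Fin L → Bool) :
    wt a = (univ.filter fun j => a j = true ∧ b j = true).card + (Aset a b).card := by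
  simp only [wt, Aset, Finset.card_filter]
  rw [← Finset.sum_add_distrib]
  refine Finset.sum_congr rfl fun j _ => ?_
  cases hja : a j <;> cases hjb : b j <;> simp

lemma wtB (a b : Fin L → Bool) :
    wt b = (univ.filter fun j => a j = true ∧ b j = true).card + (Bset a b).card := by
  simp only [wt, Bset, Finset.card_filter]
  rw [← Finset.sum_add_distrib]
  refine Finset.sum_congr rfl fun j _ => ?_
  cases hja : a j <;> cases hjb : b j <;> simp

lemma cards_eq (a b : Fin L → Bool) (h : wt a = wt b) :
    (Aset a b).card = (Bset a b).card := by
  have h1 := wtA a b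
  have h2 := wtB a b
  omega

lemma card_filter_false (a : Fin L → Bool) :
    ((univ : Finset (Fin L)).filter fun j => a j = false).card = L - wt a := by
  have h := Finset.card_filter_add_card_filter_not
    (s := (univ : Finset (Fin L))) (p := fun j => a j = true)
  have h2 : (univ.filter fun j => ¬ a j = true) = (univ.filter fun j => a j = false) := by
    refine Finset.filter_congr fun j _ => ?_; simp
  rw [h2] at h
  simp only [Finset.card_univ, Fintype.card_fin] at h
  unfold wt; omega

lemma A_le (a b : Fin L → Bool) : (Aset a b).card ≤ wt a := by
  apply Finset.card_le_card
  intro j hj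
  simp only [Aset, mem_filter] at hj ⊢
  exact ⟨hj.1, hj.2.1⟩

lemma B_le (a b : Fin L → Bool) : (Bset a b).card ≤ L - wt a := by
  rw [← card_filter_false a]
  apply Finset.card_le_card
  intro j hj
  simp only [Bset, mem_filter] at hj ⊢
  exact ⟨hj.1, hj.2.1⟩

lemma block_even (a b : Fin L → Bool) (h : wt a = wt b) :
    ∃ u, u ≤ min (wt a) (L - wt a) ∧ hammingDist a b = 2 * u := by
  refine ⟨(Aset a b).card, ?_, ?_⟩
  · exact le_min (A_le a b) ((cards_eq a b h) ▸ B_le a b)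
  · rw [dist_split, cards_eq a b h]; omega

lemma block_count (a : Fin L → Bool) (u : ℕ) :
    ((univ : Finset (Fin L → Bool)).filter fun b => wt b = wt a ∧ hammingDist a b = 2 * u).card
      ≤ (wt a).choose u * (L - wt a).choose u := by
  have htarget : ((Finset.powersetCard u (univ.filter fun j => a j = true)) ×ˢ
      (Finset.powersetCard u (univ.filter fun j => a j = false))).card
      = (wt a).choose u * (L - wt a).choose u := by
    rw [Finset.card_product, Finset.card_powersetCard, Finset.card_powersetCard,
      card_filter_false]
    rfl
  rw [← htarget]
  apply Finset.card_le_card_of_injOn (fun b => (Aset a b, Bset a b))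
  · intro b hb
    simp only [Finset.mem_coe, mem_filter, mem_univ, true_and] at hb
    have hAB := cards_eq a b hb.1.symm
    have hd := dist_split a b
    have hA : (Aset a b).card = u := by omega
    have hB : (Bset a b).card = u := by omega
    simp only [Finset.mem_coe, Finset.mem_product, Finset.mem_powersetCard]
    refine ⟨⟨?_, hA⟩, ?_, hB⟩
    · intro j hj; simp only [Aset, mem_filter] at hj ⊢; exact ⟨hj.1, hj.2.1⟩
    · intro j hj; simp only [Bset, mem_filter] at hj ⊢; exact ⟨hj.1, hj.2.1⟩
  · intro b1 _ b2 _ heq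
    simp only [Prod.mk.injEq] at heq
    obtain ⟨hA, hB⟩ := heq
    funext j
    by_cases ha : a j = true
    · have h1 := Finset.ext_iff.mp hA j
      simp only [Aset, mem_filter, mem_univ, true_and, ha, true_and] at h1
      cases hb1 : b1 j <;> cases hb2 : b2 j <;> simp_all
    · have h1 := Finset.ext_iff.mp hB j
      have ha' : a j = false := by simp at ha; exact ha
      simp only [Bset, mem_filter, mem_univ, true_and, ha', true_and] at h1
      cases hb1 : b1 j <;> cases hb2 : b2 j <;> simp_all

end blocks

lemma prod_ball_count (m L w r : ℕ) (a : Fin m → Fin L → Bool) (ha : ∀ i, wt (a i) = w) :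
    ((univ : Finset (Fin m → Fin L → Bool)).filter fun b =>
        (∀ i, wt (b i) = w) ∧ ∑ i, hammingDist (a i) (b i) ≤ r).card
      ≤ csccBallSize m L w r := by
  classical
  set v := min w (L - w) with hv
  set S := (univ : Finset (Fin m → Fin L → Bool)).filter fun b =>
      (∀ i, wt (b i) = w) ∧ ∑ i, hammingDist (a i) (b i) ≤ r with hS
  set T := (Finset.univ : Finset (Fin m → Fin (v + 1))).filter
      (fun u => 2 * (∑ i, (u i : ℕ)) ≤ r) with hT
  set f : (Fin m → Fin L → Bool) → (Fin m → Fin (v + 1)) :=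
    fun b i => ⟨min v (hammingDist (a i) (b i) / 2), Nat.lt_succ_of_le (min_le_left _ _)⟩
      with hf
  -- key: for b in S, each block distance is 2 * (f b i) with f b i ≤ v
  have key : ∀ b, (∀ i, wt (b i) = w) → ∀ i,
      hammingDist (a i) (b i) = 2 * ((f b i : ℕ)) := by
    intro b hb i
    obtain ⟨u, hu, hd⟩ := block_even (a i) (b i) (by rw [ha i, hb i])
    rw [ha i] at hu
    have : hammingDist (a i) (b i) / 2 = u := by omega
    simp only [hf, this]
    omega
  have hmaps : ∀ b ∈ S, f b ∈ T := by
    intro b hb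
    simp only [hS, mem_filter, mem_univ, true_and] at hb
    simp only [hT, mem_filter, mem_univ, true_and]
    calc 2 * ∑ i, ((f b i : ℕ)) = ∑ i, 2 * ((f b i : ℕ)) := by rw [Finset.mul_sum]
      _ = ∑ i, hammingDist (a i) (b i) := by
          exact Finset.sum_congr rfl fun i _ => (key b hb.1 i).symm
      _ ≤ r := hb.2
  rw [Finset.card_eq_sum_card_fiberwise hmaps]
  unfold csccBallSize
  rw [← hv, ← hT]
  refine Finset.sum_le_sum fun u _ => ?_
  calc (S.filter fun b => f b = u).card
      ≤ (Fintype.piFinset fun i => (univ : Finset (Fin L → Bool)).filter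
          fun c => wt c = w ∧ hammingDist (a i) c = 2 * ((u i : ℕ))).card := by
        apply Finset.card_le_card
        intro b hb
        simp only [mem_filter, hS] at hb
        obtain ⟨⟨_, hbS, _⟩, hfb⟩ := hb
        rw [Fintype.mem_piFinset]
        intro i
        simp only [mem_filter, mem_univ, true_and]
        refine ⟨hbS i, ?_⟩
        rw [key b hbS i, ← hfb]
    _ = ∏ i, ((univ : Finset (Fin L → Bool)).filter
          fun c => wt c = w ∧ hammingDist (a i) c = 2 * ((u i : ℕ))).card :=
        Fintype.card_piFinset _
    _ ≤ ∏ i, (w.choose (u i : ℕ)) * ((L - w).choose (u i : ℕ)) := by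
        refine Finset.prod_le_prod (fun _ _ => Nat.zero_le _) fun i _ => ?_
        have := block_count (a i) ((u i : ℕ))
        rw [ha i] at this
        exact this

def wordEquiv (m L : ℕ) (hL : 0 < L) : (Fin (m * L) → Bool) ≃ (Fin m → Fin L → Bool) :=
  (Equiv.arrowCongr (blockEquiv m L hL) (Equiv.refl Bool)).symm.trans (Equiv.curry _ _ _)

lemma wordEquiv_apply (m L : ℕ) (hL : 0 < L) (x : Fin (m * L) → Bool) (i : Fin m) :
    wordEquiv m L hL x i = subblock m L x i := rfl

lemma space_card (m L w : ℕ) (hL : 0 < L) :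
    ((univ : Finset (Fin (m * L) → Bool)).filter
        fun x => ∀ i, wt (subblock m L x i) = w).card = (L.choose w) ^ m := by
  classical
  have h1 := card_filter_equiv (wordEquiv m L hL) (fun b => ∀ i, wt (b i) = w)
  have h2 : ((univ : Finset (Fin m → Fin L → Bool)).filter fun b => ∀ i, wt (b i) = w)
      = Fintype.piFinset fun _ => (univ : Finset (Fin L → Bool)).filter fun c => wt c = w := by
    ext b; simp [Fintype.mem_piFinset]
  rw [h2] at h1
  rw [show ((univ : Finset (Fin (m * L) → Bool)).filter
      fun x => ∀ i, wt (subblock m L x i) = w)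
    = ((univ : Finset (Fin (m * L) → Bool)).filter
      fun x => ∀ i, wt (wordEquiv m L hL x i) = w) from rfl]
  rw [h1, Fintype.card_piFinset]
  simp [wt_card]

lemma word_ball_count (m L w r : ℕ) (hL : 0 < L) (x : Fin (m * L) → Bool)
    (hx : ∀ i, wt (subblock m L x i) = w) :
    ((univ : Finset (Fin (m * L) → Bool)).filter
        fun y => (∀ i, wt (subblock m L y i) = w) ∧ hammingDist x y ≤ r).card
      ≤ csccBallSize m L w r := by
  classical
  have hcong : ((univ : Finset (Fin (m * L) → Bool)).filter
        fun y => (∀ i, wt (subblock m L y i) = w) ∧ hammingDist x y ≤ r)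
      = ((univ : Finset (Fin (m * L) → Bool)).filter
        fun y => (∀ i, wt (wordEquiv m L hL y i) = w) ∧
          ∑ i, hammingDist (wordEquiv m L hL x i) (wordEquiv m L hL y i) ≤ r) := by
    refine Finset.filter_congr fun y _ => ?_
    rw [hamming_sum m L hL x y]
    simp only [wordEquiv_apply]
  rw [hcong, card_filter_equiv (wordEquiv m L hL)
    (fun b => (∀ i, wt (b i) = w) ∧ ∑ i, hammingDist (wordEquiv m L hL x i) (b i) ≤ r)]
  exact prod_ball_count m L w r (wordEquiv m L hL x) (fun i => hx i)

lemma ballSize_pos (m L w r : ℕ) : 1 ≤ csccBallSize m L w r := by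
  unfold csccBallSize
  have hmem : (fun _ : Fin m => (⟨0, Nat.succ_pos _⟩ : Fin (min w (L - w) + 1))) ∈
      (Finset.univ : Finset (Fin m → Fin (min w (L - w) + 1))).filter
        (fun u => 2 * (∑ i, (u i : ℕ)) ≤ r) := by
    simp
  have h := Finset.single_le_sum
    (f := fun u : Fin m → Fin (min w (L - w) + 1) =>
      ∏ i, (w.choose (u i : ℕ)) * ((L - w).choose (u i : ℕ)))
    (fun u _ => Nat.zero_le _) hmem
  simpa using h

/-- Gilbert–Varshamov bound for CSCCs: there is an `(m,L,d,w)`-CSCC of size at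
least `C(L,w)^m / D`, where `D` is the radius-`(d-1)` CSCC ball size; consequently
`C(m,L,d,w) ≥ C(L,w)^m / D`. -/
theorem stmt_1 (m L d w : ℕ) (hm : 0 < m) (hL : 0 < L) (hd : 0 < d) (hw : w ≤ L) :
    (∃ C : Finset (Fin (m * L) → Bool), isCode (CSCCspace m L w) d C ∧
      ((L.choose w : ℝ)) ^ m / (csccBallSize m L w (d - 1) : ℝ) ≤ C.card) ∧
    ((L.choose w : ℝ)) ^ m / (csccBallSize m L w (d - 1) : ℝ) ≤ maxCSCC m L d w := by
  classical
  set Kset := {k | ∃ C : Finset (Fin (m * L) → Bool), isCode (CSCCspace m L w) d C ∧ C.card = k}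
    with hKset
  have hne : Kset.Nonempty := ⟨0, ∅, ⟨by simp, by simp⟩, rfl⟩
  have hbdd : BddAbove Kset := by
    refine ⟨Fintype.card (Fin (m * L) → Bool), fun k hk => ?_⟩
    obtain ⟨C, _, hcard⟩ := hk
    rw [← hcard]
    exact Finset.card_le_univ C
  obtain ⟨C, hC, hcard⟩ := Nat.sSup_mem hne hbdd
  have hmax : ∀ z ∈ CSCCspace m L w, ∃ c ∈ C, hammingDist c z ≤ d - 1 := by
    intro z hz
    by_contra hcon
    push_neg at hcon
    have hfar : ∀ c ∈ C, d ≤ hammingDist c z := by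
      intro c hc
      have := hcon c hc
      omega
    have hzC : z ∉ C := by
      intro hzmem
      have := hfar z hzmem
      simp at this
      omega
    have hcode : isCode (CSCCspace m L w) d (insert z C) := by
      constructor
      · intro x hx
        simp only [Finset.coe_insert, Set.mem_insert_iff] at hx
        rcases hx with rfl | hx
        · exact hz
        · exact hC.1 hx
      · intro x hx y hy hxy
        simp only [Finset.mem_insert] at hx hy
        rcases hx with rfl | hx <;> rcases hy with rfl | hy
        · exact absurd rfl hxy
        · rw [hammingDist_comm]; exact hfar y hy
        · exact hfar x hx
        · exact hC.2 x hx y hy hxy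
    have : (insert z C).card ∈ Kset := ⟨insert z C, hcode, rfl⟩
    have hle := le_csSup hbdd this
    rw [Finset.card_insert_of_notMem hzC, hcard] at hle
    omega
  -- covering bound
  set spaceF := (univ : Finset (Fin (m * L) → Bool)).filter
      fun x => ∀ i, wt (subblock m L x i) = w with hspaceF
  have hcover : spaceF ⊆ C.biUnion fun c =>
      (univ : Finset (Fin (m * L) → Bool)).filter
        fun y => (∀ i, wt (subblock m L y i) = w) ∧ hammingDist c y ≤ d - 1 := by
    intro z hz
    simp only [hspaceF, mem_filter, mem_univ, true_and] at hz
    obtain ⟨c, hc, hdist⟩ := hmax z hz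
    simp only [Finset.mem_biUnion]
    exact ⟨c, hc, by simp only [mem_filter, mem_univ, true_and]; exact ⟨hz, hdist⟩⟩
  have hnat : (L.choose w) ^ m ≤ sSup Kset * csccBallSize m L w (d - 1) := by
    calc (L.choose w) ^ m = spaceF.card := (space_card m L w hL).symm
      _ ≤ (C.biUnion fun c => (univ : Finset (Fin (m * L) → Bool)).filter
            fun y => (∀ i, wt (subblock m L y i) = w) ∧ hammingDist c y ≤ d - 1).card :=
          Finset.card_le_card hcover
      _ ≤ ∑ c ∈ C, ((univ : Finset (Fin (m * L) → Bool)).filter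
            fun y => (∀ i, wt (subblock m L y i) = w) ∧ hammingDist c y ≤ d - 1).card :=
          Finset.card_biUnion_le
      _ ≤ ∑ _c ∈ C, csccBallSize m L w (d - 1) := by
          refine Finset.sum_le_sum fun c hc => ?_
          exact word_ball_count m L w (d - 1) hL c (hC.1 hc)
      _ = C.card * csccBallSize m L w (d - 1) := by rw [Finset.sum_const, smul_eq_mul]
      _ = sSup Kset * csccBallSize m L w (d - 1) := by rw [hcard]
  have hD : (0 : ℝ) < (csccBallSize m L w (d - 1) : ℝ) := by
    exact_mod_cast ballSize_pos m L w (d - 1)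
  have hmain : ((L.choose w : ℝ)) ^ m / (csccBallSize m L w (d - 1) : ℝ) ≤ sSup Kset := by
    rw [div_le_iff₀ hD]
    exact_mod_cast hnat
  refine ⟨⟨C, hC, ?_⟩, hmain⟩
  rw [hcard]
  exact hmain
end

section
/- Let m, L, d be positive integers with m ≥ d and let 0 ≤ w_s ≤ L. Then S(m,L,d,w_s) ≥ Σ_{j=w_s}^{L} C(m,L,d,j). Concretely, if for each j with w_s ≤ j ≤ L one takes an (m,L,d,j)-CSCC 𝒞_j, then the union ∪_{j=w_s}^{L} 𝒞_j is an (m,L,d,w_s)-SECC of size Σ_{j=w_s}^{L} |𝒞_j|. -/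
open Finset Filter

lemma subIdx_injective (m L : ℕ) :
    Function.Injective (fun p : Fin m × Fin L => subIdx m L p.1 p.2) := by
  rintro ⟨i, j⟩ ⟨i', j'⟩ h
  have h0 : subIdx m L i j = subIdx m L i' j' := h
  have h' : i.val * L + j.val = i'.val * L + j'.val := congrArg Fin.val h0
  have hL : 0 < L := j.pos
  have h1 : (L * i.val + j.val) = (L * i'.val + j'.val) := by
    rw [Nat.mul_comm L i.val, Nat.mul_comm L i'.val]; exact h'
  have hj : j.val = j'.val := by
    have := congrArg (fun n => n % L) h1
    simpa [Nat.mul_add_mod, Nat.mod_eq_of_lt j.isLt, Nat.mod_eq_of_lt j'.isLt] using this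
  have hi : i.val = i'.val := by
    have := congrArg (fun n => n / L) h1
    simpa [Nat.mul_add_div hL, Nat.div_eq_of_lt j.isLt, Nat.div_eq_of_lt j'.isLt] using this
  exact Prod.ext (Fin.ext hi) (Fin.ext hj)

lemma sum_sub_hamming_le (m L : ℕ) (x y : Fin (m * L) → Bool) :
    ∑ i : Fin m, hammingDist (subblock m L x i) (subblock m L y i) ≤ hammingDist x y := by
  classical
  have hD : hammingDist x y = (Finset.univ.filter fun k => x k ≠ y k).card := rfl
  set B : Fin m → Finset (Fin (m * L)) := fun i =>
    ((Finset.univ.filter fun j : Fin L => x (subIdx m L i j) ≠ y (subIdx m L i j)).image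
      (subIdx m L i)) with hB
  have hcard : ∀ i, (B i).card =
      hammingDist (subblock m L x i) (subblock m L y i) := by
    intro i
    rw [hB]
    rw [Finset.card_image_of_injective _ (fun a b hab =>
      (Prod.ext_iff.mp (subIdx_injective m L (a₁ := (i, a)) (a₂ := (i, b)) hab)).2)]
    rfl
  have hdisj : ∀ i ∈ (Finset.univ : Finset (Fin m)), ∀ i' ∈ (Finset.univ : Finset (Fin m)),
      i ≠ i' → Disjoint (B i) (B i') := by
    intro i _ i' _ hne
    rw [Finset.disjoint_left]
    intro a ha ha'
    simp only [hB, Finset.mem_image, Finset.mem_filter] at ha ha'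
    obtain ⟨j, _, hj⟩ := ha
    obtain ⟨j', _, hj'⟩ := ha'
    exact hne (Prod.ext_iff.mp (subIdx_injective m L (a₁ := (i, j)) (a₂ := (i', j'))
      (hj.trans hj'.symm))).1
  calc ∑ i : Fin m, hammingDist (subblock m L x i) (subblock m L y i)
      = ∑ i : Fin m, (B i).card := by simp [hcard]
    _ = (Finset.univ.biUnion B).card := (Finset.card_biUnion hdisj).symm
    _ ≤ (Finset.univ.filter fun k => x k ≠ y k).card := by
        apply Finset.card_le_card
        intro a ha
        simp only [Finset.mem_biUnion, hB, Finset.mem_image, Finset.mem_filter,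
          Finset.mem_univ, true_and] at ha
        obtain ⟨i, j, hj, rfl⟩ := ha
        simpa using hj
    _ = hammingDist x y := hD.symm

lemma bdd_code_set {n : ℕ} (P : Finset (Fin n → Bool) → Prop) :
    BddAbove {k | ∃ C : Finset (Fin n → Bool), P C ∧ C.card = k} := by
  refine ⟨Fintype.card (Fin n → Bool), ?_⟩
  rintro k ⟨C, _, rfl⟩
  exact Finset.card_le_univ C

lemma exists_max_CSCC (m L d w : ℕ) :
    ∃ C : Finset (Fin (m * L) → Bool),
      isCode (CSCCspace m L w) d C ∧ C.card = maxCSCC m L d w := by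
  have hne : ({k | ∃ C : Finset (Fin (m * L) → Bool),
      isCode (CSCCspace m L w) d C ∧ C.card = k}).Nonempty :=
    ⟨0, ∅, ⟨by simp, by simp⟩, rfl⟩
  exact Nat.sSup_mem hne (bdd_code_set _)

/-- For `m ≥ d`, the union of `(m,L,d,j)`-CSCCs for `w ≤ j ≤ L` is an
`(m,L,d,w)`-SECC of size the sum of the sizes; hence
`S(m,L,d,w) ≥ Σ_{j=w}^{L} C(m,L,d,j)`. -/
theorem stmt_3 (m L d w : ℕ) (hm : 0 < m) (hL : 0 < L) (hd : 0 < d) (hdm : d ≤ m)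
    (hw : w ≤ L) :
    (∀ C : ℕ → Finset (Fin (m * L) → Bool),
      (∀ j ∈ Finset.Icc w L, isCode (CSCCspace m L j) d (C j)) →
        isCode (SECCspace m L w) d ((Finset.Icc w L).biUnion C) ∧
        ((Finset.Icc w L).biUnion C).card = ∑ j ∈ Finset.Icc w L, (C j).card) ∧
    (∑ j ∈ Finset.Icc w L, maxCSCC m L d j) ≤ maxSECC m L d w := by
  classical
  have key : ∀ C : ℕ → Finset (Fin (m * L) → Bool),
      (∀ j ∈ Finset.Icc w L, isCode (CSCCspace m L j) d (C j)) →
        isCode (SECCspace m L w) d ((Finset.Icc w L).biUnion C) ∧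
        ((Finset.Icc w L).biUnion C).card = ∑ j ∈ Finset.Icc w L, (C j).card := by
    intro C hC
    have hdist : ∀ j ∈ Finset.Icc w L, ∀ j' ∈ Finset.Icc w L,
        ∀ x ∈ C j, ∀ y ∈ C j', x ≠ y → d ≤ hammingDist x y := by
      intro j hj j' hj' x hx y hy hxy
      by_cases hjj : j = j'
      · subst hjj; exact (hC j hj).2 x hx y hy hxy
      · have hxw : ∀ i : Fin m, wt (subblock m L x i) = j := (hC j hj).1 hx
        have hyw : ∀ i : Fin m, wt (subblock m L y i) = j' := (hC j' hj').1 hy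
        have h1 : ∀ i : Fin m, 1 ≤ hammingDist (subblock m L x i) (subblock m L y i) := by
          intro i
          have hne : subblock m L x i ≠ subblock m L y i := by
            intro h; exact hjj ((hxw i).symm.trans (h ▸ hyw i))
          exact hammingDist_pos.mpr hne
        calc d ≤ m := hdm
          _ = ∑ _i : Fin m, 1 := by simp
          _ ≤ ∑ i : Fin m, hammingDist (subblock m L x i) (subblock m L y i) :=
              Finset.sum_le_sum (fun i _ => h1 i)
          _ ≤ hammingDist x y := sum_sub_hamming_le m L x y
    have hdisjC : ∀ j ∈ Finset.Icc w L, ∀ j' ∈ Finset.Icc w L, j ≠ j' →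
        Disjoint (C j) (C j') := by
      intro j hj j' hj' hne
      rw [Finset.disjoint_left]
      intro x hx hx'
      have h1 := (hC j hj).1 hx ⟨0, hm⟩
      have h2 := (hC j' hj').1 hx' ⟨0, hm⟩
      exact hne (h1.symm.trans h2)
    refine ⟨⟨?_, ?_⟩, Finset.card_biUnion hdisjC⟩
    · intro x hx
      rw [Finset.mem_coe, Finset.mem_biUnion] at hx
      obtain ⟨j, hj, hxj⟩ := hx
      intro i
      have := (hC j hj).1 hxj i
      rw [this]
      exact (Finset.mem_Icc.mp hj).1
    · intro x hx y hy hxy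
      rw [Finset.mem_biUnion] at hx hy
      obtain ⟨j, hj, hxj⟩ := hx
      obtain ⟨j', hj', hyj⟩ := hy
      exact hdist j hj j' hj' x hxj y hyj hxy
  refine ⟨key, ?_⟩
  choose C hC1 hC2 using fun j => exists_max_CSCC m L d j
  obtain ⟨hcode, hcard⟩ := key C (fun j _ => hC1 j)
  have hmem : (∑ j ∈ Finset.Icc w L, maxCSCC m L d j) ∈
      {k | ∃ D : Finset (Fin (m * L) → Bool), isCode (SECCspace m L w) d D ∧ D.card = k} := by
    refine ⟨(Finset.Icc w L).biUnion C, hcode, ?_⟩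
    rw [hcard]
    exact Finset.sum_congr rfl (fun j _ => hC2 j)
  exact le_csSup (bdd_code_set _) hmem
end

section
/- Let m, L, d_1, d_2, w_s, q be positive integers with w_s ≤ L. If q ≤ H(L,d_1,w_s), then S(m,L,d_1·d_2,w_s) ≥ A_q(m,d_2). Concretely, given an (L,d_1)-heavy-weight code 𝒟 of weight parameter w_s with |𝒟| ≥ q and a code of length m over a q-symbol alphabet with pairwise Hamming distance at least d_2, replacing each symbol of each codeword by a distinct element of 𝒟 yields an (m,L,d_1 d_2,w_s)-SECC of the same size. -/
open Finset Filter

def myConcat (m L q : ℕ) (hL : 0 < L) (f : Fin q → Fin L → Bool) (x : Fin m → Fin q) :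
    Fin (m * L) → Bool :=
  fun k => f (x ⟨k.val / L, Nat.div_lt_of_lt_mul (Nat.mul_comm m L ▸ k.isLt)⟩)
    ⟨k.val % L, Nat.mod_lt _ hL⟩

lemma subIdx_spec {m L : ℕ} (i : Fin m) (j : Fin L) :
    (subIdx m L i j).val / L = i.val ∧ (subIdx m L i j).val % L = j.val := by
  have hL : 0 < L := j.pos
  have h1 : (subIdx m L i j).val = j.val + L * i.val := by
    show i.val * L + j.val = _; ring
  constructor
  · rw [h1, Nat.add_mul_div_left _ _ hL, Nat.div_eq_of_lt j.isLt, Nat.zero_add]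
  · rw [h1, Nat.add_mul_mod_self_left, Nat.mod_eq_of_lt j.isLt]

lemma myConcat_subIdx {m L q : ℕ} (hL : 0 < L) (f : Fin q → Fin L → Bool)
    (x : Fin m → Fin q) (i : Fin m) (j : Fin L) :
    myConcat m L q hL f x (subIdx m L i j) = f (x i) j := by
  unfold myConcat
  obtain ⟨h1, h2⟩ := subIdx_spec i j
  congr 1
  · congr 1; exact Fin.ext h1
  · exact Fin.ext h2

lemma subblock_myConcat {m L q : ℕ} (hL : 0 < L) (f : Fin q → Fin L → Bool)
    (x : Fin m → Fin q) (i : Fin m) :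
    subblock m L (myConcat m L q hL f x) i = f (x i) :=
  funext fun j => myConcat_subIdx hL f x i j

lemma subIdx_right_injective {m L : ℕ} (i : Fin m) :
    Function.Injective (subIdx m L i) := by
  intro j j' hjj
  have h := congrArg Fin.val hjj
  have h1 : i.val * L + j.val = i.val * L + j'.val := h
  exact Fin.ext (by omega)

lemma myConcat_injective {m L q : ℕ} (hL : 0 < L) {f : Fin q → Fin L → Bool}
    (hf : Function.Injective f) : Function.Injective (myConcat m L q hL f) := by
  intro x y hxy
  funext i
  apply hf
  rw [← subblock_myConcat hL f x i, ← subblock_myConcat hL f y i, hxy]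

lemma myConcat_dist {m L q d1 : ℕ} (hL : 0 < L) {f : Fin q → Fin L → Bool}
    (hf : ∀ a b : Fin q, a ≠ b → d1 ≤ hammingDist (f a) (f b)) (x y : Fin m → Fin q) :
    hammingDist x y * d1 ≤ hammingDist (myConcat m L q hL f x) (myConcat m L q hL f y) := by
  classical
  set T : Finset (Fin m) := Finset.univ.filter (fun i => x i ≠ y i) with hTdef
  have hT : hammingDist x y = T.card := rfl
  set S : Fin m → Finset (Fin (m * L)) := fun i =>
    (Finset.univ.filter fun j : Fin L => f (x i) j ≠ f (y i) j).image (subIdx m L i) with hSdef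
  have hScard : ∀ i, (S i).card = hammingDist (f (x i)) (f (y i)) := fun i =>
    Finset.card_image_of_injective _ (subIdx_right_injective i)
  have hdisj : ∀ i ∈ T, ∀ i' ∈ T, i ≠ i' → Disjoint (S i) (S i') := by
    intro i _ i' _ hii
    rw [Finset.disjoint_left]
    rintro k hk hk'
    simp only [hSdef, Finset.mem_image, Finset.mem_filter] at hk hk'
    obtain ⟨j, _, rfl⟩ := hk
    obtain ⟨j', _, hj'⟩ := hk'
    apply hii
    apply Fin.ext
    have h1 := (subIdx_spec i j).1
    have h2 := (subIdx_spec i' j').1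
    rw [← h1, ← h2, hj']
  have hsub : T.biUnion S ⊆ Finset.univ.filter
      (fun k => myConcat m L q hL f x k ≠ myConcat m L q hL f y k) := by
    intro k hk
    simp only [Finset.mem_biUnion, hSdef, Finset.mem_image, Finset.mem_filter] at hk
    obtain ⟨i, hi, j, hj, rfl⟩ := hk
    rw [Finset.mem_filter]
    refine ⟨Finset.mem_univ _, ?_⟩
    rw [myConcat_subIdx, myConcat_subIdx]
    exact hj.2
  calc hammingDist x y * d1 = ∑ _i ∈ T, d1 := by
        rw [Finset.sum_const, smul_eq_mul, hT]
    _ ≤ ∑ i ∈ T, (S i).card := Finset.sum_le_sum fun i hi => by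
        rw [hScard]
        exact hf _ _ (by simpa [hTdef] using hi)
    _ = (T.biUnion S).card := (Finset.card_biUnion hdisj).symm
    _ ≤ _ := Finset.card_le_card hsub

/-- Concatenation bound: if `q ≤ H(L,d₁,w)` then `S(m,L,d₁·d₂,w) ≥ A_q(m,d₂)`. -/
theorem stmt_4 (m L d1 d2 w q : ℕ) (hm : 0 < m) (hL : 0 < L) (hd1 : 0 < d1)
    (hd2 : 0 < d2) (hq : 0 < q) (hw : w ≤ L) (h : q ≤ maxHWC L d1 w) :
    maxQary q m d2 ≤ maxSECC m L (d1 * d2) w := by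
  classical
  have hbddS : BddAbove {k | ∃ C : Finset (Fin (m * L) → Bool),
      isCode (SECCspace m L w) (d1 * d2) C ∧ C.card = k} := by
    refine ⟨Fintype.card (Fin (m * L) → Bool), ?_⟩
    rintro k ⟨C, _, rfl⟩
    exact (Finset.card_le_univ C).trans_eq Finset.card_univ
  have hbddH : BddAbove {k | ∃ C : Finset (Fin L → Bool),
      isCode {x | w ≤ wt x} d1 C ∧ C.card = k} := by
    refine ⟨Fintype.card (Fin L → Bool), ?_⟩
    rintro k ⟨C, _, rfl⟩
    exact (Finset.card_le_univ C).trans_eq Finset.card_univ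
  have hneH : {k | ∃ C : Finset (Fin L → Bool),
      isCode {x | w ≤ wt x} d1 C ∧ C.card = k}.Nonempty :=
    ⟨0, ∅, ⟨by simp, by simp⟩, rfl⟩
  obtain ⟨D, hDcode, hDcard⟩ := Nat.sSup_mem hneH hbddH
  have hqD : q ≤ D.card := by rw [hDcard]; exact h
  set f : Fin q → Fin L → Bool :=
    fun i => (D.equivFin.symm (Fin.castLE hqD i) : Fin L → Bool) with hfdef
  have hfmem : ∀ i, f i ∈ D := fun i => (D.equivFin.symm (Fin.castLE hqD i)).2
  have hfinj : Function.Injective f := by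
    intro a b hab
    have := D.equivFin.symm.injective (Subtype.ext hab)
    exact Fin.castLE_injective hqD this
  have hfdist : ∀ a b : Fin q, a ≠ b → d1 ≤ hammingDist (f a) (f b) := fun a b hab =>
    hDcode.2 _ (hfmem a) _ (hfmem b) (fun hcon => hab (hfinj hcon))
  have hfwt : ∀ a : Fin q, w ≤ wt (f a) := fun a => hDcode.1 (hfmem a)
  refine csSup_le ⟨0, ∅, by simp, rfl⟩ ?_
  rintro k ⟨C, hCdist, rfl⟩
  apply le_csSup hbddS
  refine ⟨C.image (myConcat m L q hL f), ⟨?_, ?_⟩, ?_⟩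
  · intro a ha
    simp only [Finset.coe_image, Set.mem_image, Finset.mem_coe] at ha
    obtain ⟨x, hx, rfl⟩ := ha
    intro i
    rw [subblock_myConcat]
    exact hfwt _
  · intro a ha b hb hab
    rw [Finset.mem_image] at ha hb
    obtain ⟨x, hx, rfl⟩ := ha
    obtain ⟨y, hy, rfl⟩ := hb
    have hxy : x ≠ y := fun hcon => hab (by rw [hcon])
    have h2 : d2 ≤ hammingDist x y := hCdist x hx y hy hxy
    calc d1 * d2 ≤ hammingDist x y * d1 := by
          rw [Nat.mul_comm]; exact Nat.mul_le_mul h2 (le_refl d1)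
      _ ≤ _ := myConcat_dist hL hfdist x y
  · exact Finset.card_image_of_injective _ (myConcat_injective hL hfinj)
end

section
/- Let m, L, d be positive integers with d > m, L ≥ 2, and 1 ≤ w_s ≤ L. Then S(m,L,d,w_s) ≤ S(m,L−1,d−m,w_s−1). Concretely, deleting a fixed position (the same position of the same subblock in every codeword) from each codeword of an (m,L,d,w_s)-SECC yields an (m,L−1,d−m,w_s−1)-SECC of the same size. -/
open Finset Filter

/-- Index map: position `k` of the punctured word corresponds to an index of the
original word (of subblock length `L'+1`). -/
def pIdx (m L' : ℕ) (hL' : 0 < L') (k : Fin (m * L')) : Fin (m * (L' + 1)) :=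
  subIdx m (L' + 1)
    ⟨k.val / L', Nat.div_lt_of_lt_mul (lt_of_lt_of_eq k.isLt (Nat.mul_comm m L'))⟩
    (Fin.castSucc ⟨k.val % L', Nat.mod_lt _ hL'⟩)

lemma pIdx_val (m L' : ℕ) (hL' : 0 < L') (k : Fin (m * L')) :
    (pIdx m L' hL' k).val = (k.val / L') * (L' + 1) + k.val % L' := by
  simp [pIdx, subIdx]

lemma pIdx_subIdx (m L' : ℕ) (hL' : 0 < L') (i : Fin m) (j : Fin L') :
    pIdx m L' hL' (subIdx m L' i j) = subIdx m (L' + 1) i j.castSucc := by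
  apply Fin.ext
  rw [pIdx_val]
  have hdiv : (i.val * L' + j.val) / L' = i.val := by
    rw [Nat.mul_comm, Nat.mul_add_div hL', Nat.div_eq_of_lt j.isLt, Nat.add_zero]
  have hmod : (i.val * L' + j.val) % L' = j.val := by
    rw [Nat.mul_comm, Nat.mul_add_mod, Nat.mod_eq_of_lt j.isLt]
  simp [subIdx, hdiv, hmod]

lemma pIdx_inj (m L' : ℕ) (hL' : 0 < L') : Function.Injective (pIdx m L' hL') := by
  intro k k' h
  have hv := congrArg Fin.val h
  rw [pIdx_val, pIdx_val] at hv
  have hk : k.val % L' < L' + 1 := (Nat.mod_lt _ hL').trans (Nat.lt_succ_self _)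
  have hk' : k'.val % L' < L' + 1 := (Nat.mod_lt _ hL').trans (Nat.lt_succ_self _)
  have e1 : (k.val / L' * (L' + 1) + k.val % L') % (L' + 1) = k.val % L' := by
    rw [Nat.mul_comm, Nat.mul_add_mod, Nat.mod_eq_of_lt hk]
  have e2 : (k'.val / L' * (L' + 1) + k'.val % L') % (L' + 1) = k'.val % L' := by
    rw [Nat.mul_comm, Nat.mul_add_mod, Nat.mod_eq_of_lt hk']
  have hmod : k.val % L' = k'.val % L' := by rw [← e1, ← e2, hv]
  have hdiv : k.val / L' = k'.val / L' := by
    have h2 : (k.val / L') * (L' + 1) = (k'.val / L') * (L' + 1) := by omega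
    exact Nat.eq_of_mul_eq_mul_right (Nat.succ_pos _) h2
  apply Fin.ext
  rw [← Nat.div_add_mod k.val L', ← Nat.div_add_mod k'.val L', hdiv, hmod]

lemma subblock_punct (m L' : ℕ) (hL' : 0 < L') (x : Fin (m * (L' + 1)) → Bool)
    (i : Fin m) (j : Fin L') :
    subblock m L' (fun k => x (pIdx m L' hL' k)) i j
      = subblock m (L' + 1) x i j.castSucc := by
  simp only [subblock]
  rw [pIdx_subIdx]

lemma wt_punct_le (L' : ℕ) (f : Fin (L' + 1) → Bool) :
    wt f ≤ wt (fun j : Fin L' => f j.castSucc) + 1 := by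
  classical
  unfold wt
  have hsub : (Finset.univ.filter fun j => f j = true)
      ⊆ ((Finset.univ.filter fun j : Fin L' => f j.castSucc = true).image Fin.castSucc)
        ∪ {Fin.last L'} := by
    intro j hj
    rcases Fin.eq_castSucc_or_eq_last j with ⟨j', rfl⟩ | rfl
    · exact Finset.mem_union_left _
        (Finset.mem_image_of_mem _ (by simpa using hj))
    · simp
  calc (Finset.univ.filter fun j => f j = true).card
      ≤ _ := Finset.card_le_card hsub
    _ ≤ ((Finset.univ.filter fun j : Fin L' => f j.castSucc = true).image Fin.castSucc).card
        + ({Fin.last L'} : Finset (Fin (L' + 1))).card := Finset.card_union_le _ _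
    _ ≤ (Finset.univ.filter fun j : Fin L' => f j.castSucc = true).card + 1 := by
        simp [Finset.card_image_le]

lemma dist_punct (m L' : ℕ) (hL' : 0 < L') (x y : Fin (m * (L' + 1)) → Bool) :
    hammingDist x y
      ≤ hammingDist (fun k => x (pIdx m L' hL' k)) (fun k => y (pIdx m L' hL' k)) + m := by
  classical
  set ι := pIdx m L' hL' with hι
  have hinj := pIdx_inj m L' hL'
  show (Finset.univ.filter fun k => x k ≠ y k).card ≤
    (Finset.univ.filter fun k => x (ι k) ≠ y (ι k)).card + m
  have hsub : (Finset.univ.filter fun k => x k ≠ y k)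
      ⊆ ((Finset.univ.filter fun k => x (ι k) ≠ y (ι k)).image ι)
        ∪ (Finset.univ \ Finset.univ.image ι) := by
    intro k hk
    by_cases h : k ∈ Finset.univ.image ι
    · obtain ⟨k', -, rfl⟩ := Finset.mem_image.mp h
      exact Finset.mem_union_left _
        (Finset.mem_image_of_mem _ (by simpa using hk))
    · exact Finset.mem_union_right _ (by simp_all)
  have hcompl : (Finset.univ \ Finset.univ.image ι).card = m := by
    rw [Finset.card_sdiff_of_subset (Finset.subset_univ _),
      Finset.card_image_of_injective _ hinj, Finset.card_univ, Finset.card_univ]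
    simp [Fintype.card_fin, Nat.mul_succ]
  calc (Finset.univ.filter fun k => x k ≠ y k).card
      ≤ _ := Finset.card_le_card hsub
    _ ≤ ((Finset.univ.filter fun k => x (ι k) ≠ y (ι k)).image ι).card
        + (Finset.univ \ Finset.univ.image ι).card := Finset.card_union_le _ _
    _ = (Finset.univ.filter fun k => x (ι k) ≠ y (ι k)).card + m := by
        rw [Finset.card_image_of_injective _ hinj, hcompl]

/-- Puncturing bound: if `d > m` then `S(m,L,d,w) ≤ S(m,L-1,d-m,w-1)`. -/
theorem stmt_7 (m L d w : ℕ) (hm : 0 < m) (hL : 2 ≤ L) (hd : m < d)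
    (hw1 : 1 ≤ w) (hw2 : w ≤ L) :
    maxSECC m L d w ≤ maxSECC m (L - 1) (d - m) (w - 1) := by
  classical
  obtain ⟨L', rfl⟩ : ∃ L', L = L' + 1 := ⟨L - 1, by omega⟩
  have hL' : 0 < L' := by omega
  simp only [Nat.add_sub_cancel]
  -- the punctured code of a code C
  have key : ∀ k ∈ {k | ∃ C : Finset (Fin (m * (L' + 1)) → Bool),
      isCode (SECCspace m (L' + 1) w) d C ∧ C.card = k},
      k ∈ {k | ∃ C : Finset (Fin (m * L') → Bool),
      isCode (SECCspace m L' (w - 1)) (d - m) C ∧ C.card = k} := by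
    rintro k ⟨C, ⟨hCsp, hCd⟩, rfl⟩
    refine ⟨C.image (fun x k => x (pIdx m L' hL' k)), ⟨?_, ?_⟩, ?_⟩
    · -- subset of SECC space
      intro y hy
      obtain ⟨x, hx, rfl⟩ := Finset.mem_image.mp hy
      intro i
      have h1 : w ≤ wt (subblock m (L' + 1) x i) := hCsp hx i
      have h2 : wt (subblock m (L' + 1) x i)
          ≤ wt (subblock m L' (fun k => x (pIdx m L' hL' k)) i) + 1 := by
        have := wt_punct_le L' (subblock m (L' + 1) x i)
        have heq : (fun j : Fin L' => subblock m (L' + 1) x i j.castSucc)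
            = subblock m L' (fun k => x (pIdx m L' hL' k)) i := by
          funext j; rw [← subblock_punct m L' hL']
        rwa [heq] at this
      omega
    · -- distance
      intro u hu v hv huv
      obtain ⟨a, ha, rfl⟩ := Finset.mem_image.mp hu
      obtain ⟨b, hb, rfl⟩ := Finset.mem_image.mp hv
      have hab : a ≠ b := fun h => huv (by rw [h])
      have h1 := hCd a ha b hb hab
      have h2 := dist_punct m L' hL' a b
      omega
    · -- cardinality
      apply Finset.card_image_of_injOn
      intro a ha b hb hab
      by_contra hne
      have h1 := hCd a ha b hb hne
      have h2 := dist_punct m L' hL' a b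
      have h3 : hammingDist (fun k => a (pIdx m L' hL' k)) (fun k => b (pIdx m L' hL' k)) = 0 := by
        rw [hammingDist_eq_zero]; exact hab
      omega
  -- bounded above
  have hbdd : BddAbove {k | ∃ C : Finset (Fin (m * L') → Bool),
      isCode (SECCspace m L' (w - 1)) (d - m) C ∧ C.card = k} := by
    refine ⟨Fintype.card (Fin (m * L') → Bool), ?_⟩
    rintro k ⟨C, -, rfl⟩
    exact Finset.card_le_univ _
  unfold maxSECC
  exact csSup_le' fun k hk => le_csSup hbdd (key k hk)
end

section
/- Let m, L, d be positive integers with L ≥ 2 and 1 ≤ w_s ≤ L. Then w_s^m · S(m,L,d,w_s) ≤ L^m · S(m,L−1,d,w_s−1), i.e., S(m,L,d,w_s) ≤ (L/w_s)^m · S(m,L−1,d,w_s−1) (a Johnson-type bound for SECCs). -/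
open Finset Filter

section A
variable {m n : ℕ}

lemma subIdx_inj {m L : ℕ} {i i' : Fin m} {t t' : Fin L}
    (h : subIdx m L i t = subIdx m L i' t') : i = i' ∧ t = t' := by
  have hv : i.val * L + t.val = i'.val * L + t'.val := congrArg Fin.val h
  have ht := t.isLt; have ht' := t'.isLt
  have hii : i.val = i'.val := by
    have h1 : (i.val * L + t.val) / L = i.val := by
      rw [Nat.mul_comm, Nat.mul_add_div t.pos, Nat.div_eq_of_lt ht, Nat.add_zero]
    have h2 : (i'.val * L + t'.val) / L = i'.val := by
      rw [Nat.mul_comm, Nat.mul_add_div t.pos, Nat.div_eq_of_lt ht', Nat.add_zero]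
    rw [hv, h2] at h1; exact h1.symm
  refine ⟨Fin.ext hii, Fin.ext ?_⟩
  rw [hii] at hv; omega

def dFin (m n : ℕ) (k : Fin (m * n)) : Fin m :=
  ⟨k.val / n, by
    rcases Nat.eq_zero_or_pos n with h | h
    · exact absurd k.isLt (by simp [h])
    · exact Nat.div_lt_of_lt_mul (lt_of_lt_of_le k.isLt (le_of_eq (Nat.mul_comm m n)))⟩

def rFin (m n : ℕ) (hn : 0 < n) (k : Fin (m * n)) : Fin n := ⟨k.val % n, Nat.mod_lt _ hn⟩

lemma subIdx_decomp (hn : 0 < n) (k : Fin (m * n)) :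
    subIdx m n (dFin m n k) (rFin m n hn k) = k :=
  Fin.ext (Nat.div_add_mod' k.val n)

lemma dFin_subIdx (hn : 0 < n) (i : Fin m) (t : Fin n) :
    dFin m n (subIdx m n i t) = i :=
  (subIdx_inj (subIdx_decomp hn (subIdx m n i t))).1

lemma rFin_subIdx (hn : 0 < n) (i : Fin m) (t : Fin n) :
    rFin m n hn (subIdx m n i t) = t :=
  (subIdx_inj (subIdx_decomp hn (subIdx m n i t))).2

def iota (m n : ℕ) (hn : 0 < n) (j : Fin m → Fin (n + 1)) (k : Fin (m * n)) : Fin (m * (n + 1)) :=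
  subIdx m (n + 1) (dFin m n k) ((j (dFin m n k)).succAbove (rFin m n hn k))

lemma iota_subIdx (hn : 0 < n) (j : Fin m → Fin (n + 1)) (i : Fin m) (t : Fin n) :
    iota m n hn j (subIdx m n i t) = subIdx m (n + 1) i ((j i).succAbove t) := by
  rw [iota, dFin_subIdx hn, rFin_subIdx hn]

lemma iota_inj (hn : 0 < n) (j : Fin m → Fin (n + 1)) :
    Function.Injective (iota m n hn j) := by
  intro k k' h
  obtain ⟨hi, hs⟩ := subIdx_inj h
  rw [hi] at hs
  have hr : rFin m n hn k = rFin m n hn k' := Fin.succAbove_right_injective hs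
  rw [← subIdx_decomp hn k, ← subIdx_decomp hn k', hi, hr]

lemma mem_range_iota (hn : 0 < n) (j : Fin m → Fin (n + 1)) (c : Fin (m * (n + 1)))
    (h : c ≠ subIdx m (n + 1) (dFin m (n + 1) c) (j (dFin m (n + 1) c))) :
    ∃ k, iota m n hn j k = c := by
  have hc : subIdx m (n + 1) (dFin m (n+1) c) (rFin m (n+1) (Nat.succ_pos n) c) = c :=
    subIdx_decomp (Nat.succ_pos n) c
  have hs : rFin m (n+1) (Nat.succ_pos n) c ≠ j (dFin m (n+1) c) := by
    intro he; rw [he] at hc; exact h hc.symm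
  obtain ⟨u, hu⟩ := Fin.exists_succAbove_eq hs
  exact ⟨subIdx m n (dFin m (n+1) c) u, by rw [iota_subIdx hn, hu, hc]⟩

lemma wt_eq_sum {N : ℕ} (y : Fin N → Bool) :
    wt y = ∑ s, (if y s = true then 1 else 0) := Finset.card_filter _ _

lemma wt_split (y : Fin (n + 1) → Bool) (p : Fin (n + 1)) :
    wt y = (if y p = true then 1 else 0) + wt (fun u => y (p.succAbove u)) := by
  rw [wt_eq_sum, wt_eq_sum, Fin.sum_univ_succAbove (fun s => if y s = true then 1 else 0) p]

lemma ham_le (hn : 0 < n) (j : Fin m → Fin (n + 1)) (x y : Fin (m * (n + 1)) → Bool)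
    (hx : ∀ i, x (subIdx m (n + 1) i (j i)) = true)
    (hy : ∀ i, y (subIdx m (n + 1) i (j i)) = true) :
    hammingDist x y ≤
      hammingDist (fun k => x (iota m n hn j k)) (fun k => y (iota m n hn j k)) := by
  classical
  have hsub : (Finset.univ.filter fun c => x c ≠ y c) ⊆
      (Finset.univ.filter fun k =>
        x (iota m n hn j k) ≠ y (iota m n hn j k)).image (iota m n hn j) := by
    intro c hc
    simp only [Finset.mem_filter, Finset.mem_univ, true_and] at hc
    have hne : c ≠ subIdx m (n + 1) (dFin m (n+1) c) (j (dFin m (n+1) c)) := by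
      intro he
      rw [he, hx, hy] at hc
      exact hc rfl
    obtain ⟨k, hk⟩ := mem_range_iota hn j c hne
    refine Finset.mem_image.mpr ⟨k, ?_, hk⟩
    simp only [Finset.mem_filter, Finset.mem_univ, true_and, hk]
    exact hc
  calc hammingDist x y ≤ _ := Finset.card_le_card hsub
    _ = _ := Finset.card_image_of_injOn ((iota_inj hn j).injOn)

lemma mem_secc {v : ℕ} (hn : 0 < n) (j : Fin m → Fin (n + 1)) (x : Fin (m * (n + 1)) → Bool)
    (hx : x ∈ SECCspace m (n + 1) (v + 1))
    (hxj : ∀ i, x (subIdx m (n + 1) i (j i)) = true) :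
    (fun k => x (iota m n hn j k)) ∈ SECCspace m n v := by
  intro i
  have h1 : wt (subblock m (n + 1) x i) =
      1 + wt (subblock m n (fun k => x (iota m n hn j k)) i) := by
    rw [wt_split (subblock m (n + 1) x i) (j i)]
    congr 1
    · simp [subblock, hxj i]
    · congr 1
      funext t
      simp [subblock, iota_subIdx hn]
  have h2 := hx i
  omega

lemma secc_bdd (m n d v : ℕ) :
    BddAbove {k | ∃ C : Finset (Fin (m * n) → Bool), isCode (SECCspace m n v) d C ∧ C.card = k} := by
  refine ⟨2 ^ (m * n), ?_⟩
  rintro k ⟨C', _, rfl⟩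
  calc C'.card ≤ Fintype.card (Fin (m * n) → Bool) := Finset.card_le_univ _
    _ = 2 ^ (m * n) := by simp

lemma keylem (m n d v : ℕ) (hn : 0 < n) (hd : 0 < d)
    (C : Finset (Fin (m * (n + 1)) → Bool)) (hC : isCode (SECCspace m (n + 1) (v + 1)) d C) :
    (v + 1) ^ m * C.card ≤ (n + 1) ^ m * maxSECC m n d v := by
  classical
  set M := maxSECC m n d v with hM
  have hj : ∀ j : Fin m → Fin (n + 1),
      (C.filter fun x => ∀ i, x (subIdx m (n + 1) i (j i)) = true).card ≤ M := by
    intro j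
    set Cj := C.filter fun x => ∀ i, x (subIdx m (n + 1) i (j i)) = true with hCj
    set F := fun (x : Fin (m * (n + 1)) → Bool) (k : Fin (m * n)) => x (iota m n hn j k) with hF
    have hdist : ∀ x ∈ Cj, ∀ y ∈ Cj, x ≠ y → d ≤ hammingDist (F x) (F y) := by
      intro x hx y hy hne
      have hx' := Finset.mem_filter.mp hx
      have hy' := Finset.mem_filter.mp hy
      exact le_trans (hC.2 x hx'.1 y hy'.1 hne) (ham_le hn j x y hx'.2 hy'.2)
    have hinj : Set.InjOn F Cj := by
      intro x hx y hy hFe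
      by_contra hne
      have h1 := hdist x hx y hy hne
      rw [hFe, hammingDist_self] at h1
      omega
    have hcard : (Cj.image F).card = Cj.card := Finset.card_image_of_injOn hinj
    have hcode : isCode (SECCspace m n v) d (Cj.image F) := by
      constructor
      · intro z hz
        simp only [Finset.coe_image, Set.mem_image, Finset.mem_coe] at hz
        obtain ⟨x, hx, rfl⟩ := hz
        have hx' := Finset.mem_filter.mp hx
        exact mem_secc hn j x (hC.1 hx'.1) hx'.2
      · intro a ha b hb hab
        obtain ⟨x, hx, rfl⟩ := Finset.mem_image.mp ha
        obtain ⟨y, hy, rfl⟩ := Finset.mem_image.mp hb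
        exact hdist x hx y hy (fun h => hab (by rw [h]))
    rw [← hcard]
    exact le_csSup (secc_bdd m n d v) ⟨Cj.image F, hcode, rfl⟩
  have hcount : (v + 1) ^ m * C.card ≤
      ∑ j : Fin m → Fin (n + 1),
        (C.filter fun x => ∀ i, x (subIdx m (n + 1) i (j i)) = true).card := by
    have step1 : ∀ x ∈ C,
        (v + 1) ^ m ≤ ∑ j : Fin m → Fin (n + 1),
          (if (∀ i, x (subIdx m (n + 1) i (j i)) = true) then 1 else 0) := by
      intro x hx
      have heq : (Finset.univ.filter fun j : Fin m → Fin (n + 1) =>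
            ∀ i, x (subIdx m (n + 1) i (j i)) = true) =
          Fintype.piFinset (fun i => Finset.univ.filter fun t => x (subIdx m (n + 1) i t) = true) := by
        ext j
        simp [Fintype.mem_piFinset]
      have h2 : (∑ j : Fin m → Fin (n + 1),
          (if (∀ i, x (subIdx m (n + 1) i (j i)) = true) then 1 else 0)) =
          ∏ i, wt (subblock m (n + 1) x i) := by
        rw [← Finset.card_filter, heq, Fintype.card_piFinset]
        rfl
      rw [h2]
      calc (v + 1) ^ m = ∏ _i : Fin m, (v + 1) := by simp
        _ ≤ ∏ i, wt (subblock m (n + 1) x i) :=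
          Finset.prod_le_prod' fun i _ => hC.1 hx i
    calc (v + 1) ^ m * C.card = ∑ _x ∈ C, (v + 1) ^ m := by
          rw [Finset.sum_const, smul_eq_mul, Nat.mul_comm]
      _ ≤ ∑ x ∈ C, ∑ j : Fin m → Fin (n + 1),
            (if (∀ i, x (subIdx m (n + 1) i (j i)) = true) then 1 else 0) :=
          Finset.sum_le_sum step1
      _ = ∑ j : Fin m → Fin (n + 1), ∑ x ∈ C,
            (if (∀ i, x (subIdx m (n + 1) i (j i)) = true) then 1 else 0) :=
          Finset.sum_comm
      _ = _ := by
          refine Finset.sum_congr rfl fun j _ => ?_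
          rw [Finset.card_filter]
  calc (v + 1) ^ m * C.card ≤ _ := hcount
    _ ≤ ∑ _j : Fin m → Fin (n + 1), M := Finset.sum_le_sum fun j _ => hj j
    _ = (n + 1) ^ m * M := by
        rw [Finset.sum_const, Finset.card_univ, smul_eq_mul]
        congr 1
        simp [Fintype.card_fun]

end A

/-- Johnson-type bound for SECCs: `w^m · S(m,L,d,w) ≤ L^m · S(m,L-1,d,w-1)`. -/
theorem stmt_8 (m L d w : ℕ) (hm : 0 < m) (hL : 2 ≤ L) (hd : 0 < d)
    (hw1 : 1 ≤ w) (hw2 : w ≤ L) :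
    w ^ m * maxSECC m L d w ≤ L ^ m * maxSECC m (L - 1) d (w - 1) := by
  obtain ⟨n, rfl⟩ : ∃ n, L = n + 1 := ⟨L - 1, by omega⟩
  obtain ⟨v, rfl⟩ : ∃ v, w = v + 1 := ⟨w - 1, by omega⟩
  simp only [Nat.add_sub_cancel]
  have hn : 0 < n := by omega
  have hSne : Set.Nonempty {k | ∃ C : Finset (Fin (m * (n + 1)) → Bool),
      isCode (SECCspace m (n + 1) (v + 1)) d C ∧ C.card = k} := by
    refine ⟨0, ∅, ⟨?_, ?_⟩, by simp⟩
    · simp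
    · simp
  obtain ⟨C, hC, hCcard⟩ := Nat.sSup_mem hSne (secc_bdd m (n + 1) d (v + 1))
  have hkey := keylem m n d v hn hd C hC
  have hrw : maxSECC m (n + 1) d (v + 1) = C.card := hCcard.symm
  rw [hrw]
  exact hkey
end

section
/- Let m, n, z be positive integers and let k_1,…,k_m be integers with 0 ≤ k_i ≤ n for all i and k_1+⋯+k_m = z. Then ∏_{i=1}^m C(n,k_i) ≤ C(n,⌊z/m⌋)^{m_1} · C(n,⌈z/m⌉)^{m−m_1}, where m_1 = m·⌈z/m⌉ − z and C(a,b) denotes the binomial coefficient. -/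
open Finset Filter

lemma stepL (n a b : ℕ) (hab : a + 2 ≤ b) (_hbn : b ≤ n) :
    n.choose a * n.choose b ≤ n.choose (a+1) * n.choose (b-1) := by
  have hb1 : 1 ≤ b := by omega
  have e1 : n.choose (a+1) * (a+1) = n.choose a * (n - a) :=
    Nat.choose_succ_right_eq n a
  have e2 : n.choose b * b = n.choose (b-1) * (n - (b-1)) := by
    have h := Nat.choose_succ_right_eq n (b-1)
    rwa [Nat.sub_add_cancel hb1] at h
  have key : (n - (b-1)) * (a+1) ≤ (n - a) * b :=
    Nat.mul_le_mul (Nat.sub_le_sub_left (by omega) n) (by omega)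
  have hpos : 0 < (a+1) * b := by positivity
  apply Nat.le_of_mul_le_mul_right _ hpos
  calc n.choose a * n.choose b * ((a+1) * b)
      = n.choose a * (n.choose b * b) * (a+1) := by ring
    _ = n.choose a * (n.choose (b-1) * (n - (b-1))) * (a+1) := by rw [e2]
    _ = (n.choose a * n.choose (b-1)) * ((n - (b-1)) * (a+1)) := by ring
    _ ≤ (n.choose a * n.choose (b-1)) * ((n - a) * b) := Nat.mul_le_mul_left _ key
    _ = (n.choose a * (n - a)) * n.choose (b-1) * b := by ring
    _ = (n.choose (a+1) * (a+1)) * n.choose (b-1) * b := by rw [e1]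
    _ = n.choose (a+1) * n.choose (b-1) * ((a+1) * b) := by ring

@[to_additive sum3]
lemma prod3 {M : Type*} [CommMonoid M] {m : ℕ} (g : Fin m → M) {i j : Fin m}
    (hij : i ≠ j) :
    ∏ x, g x = g i * g j * ∏ x ∈ (univ.erase i).erase j, g x := by
  rw [← Finset.mul_prod_erase univ g (mem_univ i),
    ← Finset.mul_prod_erase (univ.erase i) g
      (Finset.mem_erase.2 ⟨hij.symm, mem_univ j⟩), mul_assoc]

lemma terminalL (n m z : ℕ) (hm : 0 < m) (k : Fin m → ℕ)
    (hflat : ∀ i j, k j ≤ k i + 1) (hsum : ∑ i, k i = z) :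
    ∏ i, n.choose (k i) ≤
      n.choose (z / m) ^ (m * ((z + m - 1) / m) - z) *
        n.choose ((z + m - 1) / m) ^ (m - (m * ((z + m - 1) / m) - z)) := by
  have : Nonempty (Fin m) := ⟨⟨0, hm⟩⟩
  obtain ⟨i0, -, hmin⟩ := Finset.exists_min_image univ k univ_nonempty
  have hrange : ∀ i, k i = k i0 ∨ k i = k i0 + 1 := by
    intro i
    have h1 := hmin i (mem_univ i)
    have h2 := hflat i0 i
    omega
  set a := k i0 with ha
  set c := (univ.filter (fun i => k i = a + 1)).card with hc
  have hcard : (univ.filter (fun i => ¬ k i = a + 1)).card = m - c := by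
    have h := Finset.card_filter_add_card_filter_not
      (s := (univ : Finset (Fin m))) (p := fun i => k i = a + 1)
    simp only [Finset.card_univ, Fintype.card_fin] at h
    omega
  have hclt : c < m := by
    have hsub : univ.filter (fun i => k i = a + 1) ⊆ univ.erase i0 := by
      intro x hx
      simp only [mem_filter] at hx
      refine Finset.mem_erase.2 ⟨fun h => ?_, mem_univ x⟩
      rw [h] at hx
      omega
    have h2 := Finset.card_le_card hsub
    rw [Finset.card_erase_of_mem (mem_univ i0), Finset.card_univ, Fintype.card_fin] at h2
    omega
  have hz2 : z = m * a + c := by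
    have e1 : ∑ i ∈ univ.filter (fun i => k i = a + 1), k i = c * (a + 1) := by
      rw [Finset.sum_congr rfl (fun x hx => (mem_filter.1 hx).2), Finset.sum_const,
        smul_eq_mul, hc]
    have e2 : ∑ i ∈ univ.filter (fun i => ¬ k i = a + 1), k i = (m - c) * a := by
      rw [Finset.sum_congr rfl (fun x hx => by
        have hne := (mem_filter.1 hx).2
        rcases hrange x with h | h
        · exact h
        · exact absurd h hne), Finset.sum_const, smul_eq_mul, hcard]
    have h3 : (∑ i ∈ univ.filter (fun i => k i = a + 1), k i) +
        ∑ i ∈ univ.filter (fun i => ¬ k i = a + 1), k i = z := by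
      rw [Finset.sum_filter_add_sum_filter_not]; exact hsum
    rw [e1, e2] at h3
    obtain ⟨d, hd⟩ := Nat.le.dest (le_of_lt hclt)
    have hmc : m - c = d := by omega
    rw [hmc] at h3
    nlinarith [h3]
  have hprod : ∏ i, n.choose (k i) = n.choose (a+1) ^ c * n.choose a ^ (m - c) := by
    rw [← Finset.prod_filter_mul_prod_filter_not univ (fun i => k i = a + 1)
      (fun i => n.choose (k i))]
    congr 1
    · rw [Finset.prod_congr rfl (fun x hx => by rw [(mem_filter.1 hx).2]),
        Finset.prod_const, hc]
    · rw [Finset.prod_congr rfl (fun x hx => by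
        have hne := (mem_filter.1 hx).2
        rcases hrange x with h | h
        · rw [h]
        · exact absurd h hne), Finset.prod_const, hcard]
  rcases Nat.eq_zero_or_pos c with hc0 | hc1
  · -- c = 0 : z = m*a
    have hzma : z = m * a := by omega
    have hq : z / m = a := by
      rw [hzma, Nat.mul_div_cancel_left _ hm]
    have hQ : (z + m - 1) / m = a := by
      have h1 : z + m - 1 = m * a + (m - 1) := by omega
      rw [h1, Nat.mul_add_div hm, Nat.div_eq_of_lt (by omega)]
      omega
    have hm1 : m * a - z = 0 := by omega
    rw [hprod, hc0, hq, hQ, hm1]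
    simp
  · -- 1 ≤ c < m
    have hq : z / m = a := by
      rw [hz2, Nat.mul_add_div hm, Nat.div_eq_of_lt hclt]
      omega
    have hQ : (z + m - 1) / m = a + 1 := by
      have hma : m * (a + 1) = m * a + m := by ring
      have h1 : z + m - 1 = m * (a + 1) + (c - 1) := by omega
      rw [h1, Nat.mul_add_div hm, Nat.div_eq_of_lt (by omega)]
    have hm1 : m * (a + 1) - z = m - c := by
      have hma : m * (a + 1) = m * a + m := by ring
      omega
    have hm2 : m - (m - c) = c := by omega
    rw [hprod, hq, hQ, hm1, hm2, mul_comm]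

lemma auxL (n : ℕ) : ∀ N m z, 0 < m → ∀ k : Fin m → ℕ,
    (∑ i, k i ^ 2) ≤ N → (∀ i, k i ≤ n) → ∑ i, k i = z →
    ∏ i, n.choose (k i) ≤
      n.choose (z / m) ^ (m * ((z + m - 1) / m) - z) *
        n.choose ((z + m - 1) / m) ^ (m - (m * ((z + m - 1) / m) - z)) := by
  intro N
  induction N using Nat.strong_induction_on with
  | _ N ih =>
    intro m z hm k hsq hk hsum
    by_cases hgap : ∃ i j, k i + 2 ≤ k j
    · obtain ⟨i, j, hij⟩ := hgap
      have hne : i ≠ j := by rintro rfl; omega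
      set k' : Fin m → ℕ :=
        Function.update (Function.update k i (k i + 1)) j (k j - 1) with hk'
      have hk'i : k' i = k i + 1 := by
        rw [hk', Function.update_of_ne hne, Function.update_self]
      have hk'j : k' j = k j - 1 := by
        rw [hk', Function.update_self]
      have hk'x : ∀ x, x ≠ i → x ≠ j → k' x = k x := by
        intro x hxi hxj
        rw [hk', Function.update_of_ne hxj, Function.update_of_ne hxi]
      -- sums over the rest agree
      have hrest : ∀ (f : ℕ → ℕ),
          ∑ x ∈ (univ.erase i).erase j, f (k' x) =
          ∑ x ∈ (univ.erase i).erase j, f (k x) := by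
        intro f
        refine Finset.sum_congr rfl (fun x hx => ?_)
        have hxj := (Finset.mem_erase.1 hx).1
        have hxi := (Finset.mem_erase.1 (Finset.mem_erase.1 hx).2).1
        rw [hk'x x hxi hxj]
      have hrestP : ∏ x ∈ (univ.erase i).erase j, n.choose (k' x) =
          ∏ x ∈ (univ.erase i).erase j, n.choose (k x) := by
        refine Finset.prod_congr rfl (fun x hx => ?_)
        have hxj := (Finset.mem_erase.1 hx).1
        have hxi := (Finset.mem_erase.1 (Finset.mem_erase.1 hx).2).1
        rw [hk'x x hxi hxj]
      have hsum' : ∑ x, k' x = z := by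
        rw [sum3 k' hne, hk'i, hk'j, hrest (fun t => t)]
        rw [sum3 k hne] at hsum
        omega
      have hsq' : ∑ x, k' x ^ 2 < N := by
        have h1 : ∑ x, k' x ^ 2 =
            (k i + 1) ^ 2 + (k j - 1) ^ 2 + ∑ x ∈ (univ.erase i).erase j, k x ^ 2 := by
          rw [sum3 (fun x => k' x ^ 2) hne, hk'i, hk'j, hrest (fun t => t ^ 2)]
        have h2 : ∑ x, k x ^ 2 =
            k i ^ 2 + k j ^ 2 + ∑ x ∈ (univ.erase i).erase j, k x ^ 2 := by
          rw [sum3 (fun x => k x ^ 2) hne]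
        obtain ⟨d, hd⟩ : ∃ d, k j = k i + 2 + d := ⟨k j - (k i + 2), by omega⟩
        have key : (k i + 1) ^ 2 + (k j - 1) ^ 2 + 2 ≤ k i ^ 2 + k j ^ 2 := by
          rw [hd]
          have hsub : k i + 2 + d - 1 = k i + 1 + d := by omega
          rw [hsub]
          nlinarith [sq_nonneg (k i), sq_nonneg d]
        omega
      have hk' : ∀ x, k' x ≤ n := by
        intro x
        by_cases hxi : x = i
        · rw [hxi, hk'i]; have := hk j; omega
        by_cases hxj : x = j
        · rw [hxj, hk'j]; have := hk j; omega
        · rw [hk'x x hxi hxj]; exact hk x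
      have hstep : ∏ x, n.choose (k x) ≤ ∏ x, n.choose (k' x) := by
        rw [prod3 (fun x => n.choose (k x)) hne, prod3 (fun x => n.choose (k' x)) hne,
          hk'i, hk'j, hrestP]
        exact Nat.mul_le_mul_right _ (stepL n (k i) (k j) hij (hk j))
      exact le_trans hstep
        (ih (∑ x, k' x ^ 2) (lt_of_lt_of_le hsq' (le_refl N) |>.trans_le (le_refl N))
          m z hm k' (le_refl _) hk' hsum')
    · push_neg at hgap
      exact terminalL n m z hm k (fun i j => by have := hgap i j; omega) hsum


/-- Log-concavity of binomial coefficients: if `0 ≤ k_i ≤ n` and `Σ k_i = z` then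
`∏ C(n,k_i) ≤ C(n,⌊z/m⌋)^{m₁} · C(n,⌈z/m⌉)^{m-m₁}` with `m₁ = m⌈z/m⌉ - z`. -/
theorem stmt_10 (m n z : ℕ) (hm : 0 < m) (hn : 0 < n) (hz : 0 < z)
    (k : Fin m → ℕ) (hk : ∀ i, k i ≤ n) (hsum : ∑ i, k i = z) :
    ∏ i, n.choose (k i) ≤
      n.choose (z / m) ^ (m * ((z + m - 1) / m) - z) *
        n.choose ((z + m - 1) / m) ^ (m - (m * ((z + m - 1) / m) - z)) :=
  auxL n (∑ i, k i ^ 2) m z hm k (le_refl _) hk hsum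
end

section
/- Let L and w_s be integers with 1 ≤ w_s ≤ L−1, and let k be an integer with 0 < k ≤ w_s(L−w_s)/L. Then C(w_s,k)·C(L−w_s,k) > C(w_s,k−1)·C(L−w_s,k−1), where C(a,b) denotes the binomial coefficient. -/
open Finset Filter

/-- For `0 < k ≤ w(L-w)/L` the products `C(w,k)·C(L-w,k)` strictly increase in `k`. -/
theorem stmt_11 (L w k : ℕ) (hw1 : 1 ≤ w) (hw2 : w ≤ L - 1) (hk0 : 0 < k)
    (hk : (k : ℝ) ≤ (w : ℝ) * ((L : ℝ) - w) / L) :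
    w.choose (k - 1) * (L - w).choose (k - 1) < w.choose k * (L - w).choose k := by
  have hL2 : 2 ≤ L := by omega
  have hwL : w + 1 ≤ L := by omega
  set b := L - w with hb
  have hLwb : L = w + b := by omega
  have hb1 : 1 ≤ b := by omega
  -- translate hk to a ℕ inequality : k * L ≤ w * b
  have hcast : ((L:ℝ) - w) = (b : ℝ) := by
    rw [hb]; push_cast [Nat.cast_sub (by omega : w ≤ L)]; ring
  have hLpos : (0:ℝ) < (L:ℝ) := by positivity
  have hnat : k * L ≤ w * b := by
    have : (k:ℝ) * L ≤ (w:ℝ) * b := by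
      rw [← hcast]
      calc (k:ℝ) * L ≤ ((w:ℝ) * ((L:ℝ) - w) / L) * L := by
            apply mul_le_mul_of_nonneg_right hk (le_of_lt hLpos)
        _ = (w:ℝ) * ((L:ℝ) - w) := by field_simp
    exact_mod_cast this
  have hkw : k ≤ w := by nlinarith [hnat, hLwb, hb1, hk0]
  have hkb : k ≤ b := by nlinarith [hnat, hLwb, hw1, hk0]
  -- key inequality : k^2 < (w - (k-1)) * (b - (k-1))
  obtain ⟨a', ha'⟩ : ∃ a', w = k + a' := ⟨w - k, by omega⟩
  obtain ⟨b', hb'⟩ : ∃ b', b = k + b' := ⟨b - k, by omega⟩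
  have hkey : k * k < (w - (k-1)) * (b - (k-1)) := by
    have h1 : w - (k-1) = a' + 1 := by omega
    have h2 : b - (k-1) = b' + 1 := by omega
    rw [h1, h2]
    nlinarith [hnat, hLwb, ha', hb']
  -- choose identities
  have idw : w.choose k * k = w.choose (k-1) * (w - (k-1)) := by
    have := Nat.choose_succ_right_eq w (k-1)
    rwa [show k - 1 + 1 = k by omega] at this
  have idb : b.choose k * k = b.choose (k-1) * (b - (k-1)) := by
    have := Nat.choose_succ_right_eq b (k-1)
    rwa [show k - 1 + 1 = k by omega] at this
  have hpos : 0 < w.choose (k-1) * b.choose (k-1) :=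
    Nat.mul_pos (Nat.choose_pos (by omega)) (Nat.choose_pos (by omega))
  have hmain : (w.choose k * b.choose k) * (k * k)
      = (w.choose (k-1) * b.choose (k-1)) * ((w - (k-1)) * (b - (k-1))) := by
    calc (w.choose k * b.choose k) * (k * k)
        = (w.choose k * k) * (b.choose k * k) := by ring
      _ = (w.choose (k-1) * (w - (k-1))) * (b.choose (k-1) * (b - (k-1))) := by
          rw [idw, idb]
      _ = (w.choose (k-1) * b.choose (k-1)) * ((w - (k-1)) * (b - (k-1))) := by ring
  have := calc (w.choose (k-1) * b.choose (k-1)) * (k * k)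
      < (w.choose (k-1) * b.choose (k-1)) * ((w - (k-1)) * (b - (k-1))) :=
        (Nat.mul_lt_mul_left hpos).mpr hkey
    _ = (w.choose k * b.choose k) * (k * k) := hmain.symm
  exact Nat.lt_of_mul_lt_mul_right this
end

section
/- Let L ≥ 2 and 1 ≤ w_s ≤ L−1 be integers, and let δ be a real number with 0 < δ < δ* := 2(w_s/L)(1−w_s/L). Set ũ = δL/4. Then γ(L,δ,w_s/L) ≤ (1/L)·log C(L,w_s) − ((⌈ũ⌉−ũ)/L)·log C(w_s,⌊ũ⌋) − ((1+ũ−⌈ũ⌉)/L)·log C(w_s,⌈ũ⌉) − ((⌈ũ⌉−ũ)/L)·log C(L−w_s,⌊ũ⌋) − ((1+ũ−⌈ũ⌉)/L)·log C(L−w_s,⌈ũ⌉) − (1/L)·h(⌈ũ⌉−ũ), where C(a,b) denotes the binomial coefficient (asymptotic sphere-packing bound for CSCCs). -/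
open Finset Filter

section Aux

private def trm (n k i : ℕ) : ℕ := n.choose i * k^i * (n-k)^(n-i)

lemma step_up {n k i : ℕ} (h1 : i < k) (hk : k ≤ n) : trm n k i ≤ trm n k (i+1) := by
  have hin : i < n := lt_of_lt_of_le h1 hk
  have key : n.choose i * (n-k) ≤ n.choose (i+1) * k := by
    apply Nat.le_of_mul_le_mul_right _ (Nat.succ_pos i)
    have h2 : n.choose (i+1) * k * (i+1) = n.choose i * ((n-i) * k) := by
      rw [show n.choose (i+1) * k * (i+1) = n.choose (i+1) * (i+1) * k by ring,
        Nat.choose_succ_right_eq]; ring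
    rw [h2]
    have : (n-k) * (i+1) ≤ (n-i) * k :=
      Nat.mul_le_mul (Nat.sub_le_sub_left (le_of_lt h1) n) h1
    calc n.choose i * (n-k) * (i+1) = n.choose i * ((n-k)*(i+1)) := by ring
      _ ≤ n.choose i * ((n-i)*k) := Nat.mul_le_mul_left _ this
  have hni : n - i = (n - (i+1)) + 1 := by omega
  calc trm n k i = (n.choose i * (n-k)) * (k^i * (n-k)^(n-(i+1))) := by
        unfold trm; rw [hni]; ring
    _ ≤ (n.choose (i+1) * k) * (k^i * (n-k)^(n-(i+1))) := Nat.mul_le_mul_right _ key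
    _ = trm n k (i+1) := by unfold trm; ring

lemma step_down {n k i : ℕ} (h1 : k ≤ i) (hi : i < n) : trm n k (i+1) ≤ trm n k i := by
  have key : n.choose (i+1) * k ≤ n.choose i * (n-k) := by
    apply Nat.le_of_mul_le_mul_right _ (Nat.succ_pos i)
    have h2 : n.choose (i+1) * k * (i+1) = n.choose i * ((n-i) * k) := by
      rw [show n.choose (i+1) * k * (i+1) = n.choose (i+1) * (i+1) * k by ring,
        Nat.choose_succ_right_eq]; ring
    rw [h2]
    have : (n-i) * k ≤ (n-k) * (i+1) :=
      Nat.mul_le_mul (Nat.sub_le_sub_left h1 n) (le_trans h1 (Nat.le_succ i))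
    calc n.choose i * ((n-i)*k) ≤ n.choose i * ((n-k)*(i+1)) := Nat.mul_le_mul_left _ this
      _ = n.choose i * (n-k) * (i+1) := by ring
  have hni : n - i = (n - (i+1)) + 1 := by omega
  calc trm n k (i+1) = (n.choose (i+1) * k) * (k^i * (n-k)^(n-(i+1))) := by
        unfold trm; ring
    _ ≤ (n.choose i * (n-k)) * (k^i * (n-k)^(n-(i+1))) := Nat.mul_le_mul_right _ key
    _ = trm n k i := by unfold trm; rw [hni]; ring

lemma term_le {n k : ℕ} (hk : k ≤ n) : ∀ i, i ≤ n → trm n k i ≤ trm n k k := by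
  have up : ∀ j, ∀ i, i + j = k → trm n k i ≤ trm n k k := by
    intro j
    induction j with
    | zero => intro i hi; simp at hi; subst hi; exact le_refl _
    | succ j ih =>
      intro i hi
      have h1 : i < k := by omega
      exact le_trans (step_up h1 hk) (ih (i+1) (by omega))
  have down : ∀ j, k + j ≤ n → trm n k (k + j) ≤ trm n k k := by
    intro j
    induction j with
    | zero => intro _; exact le_refl _
    | succ j ih =>
      intro hj
      have hs := step_down (n:=n) (k:=k) (i := k + j) (Nat.le_add_right _ _) (by omega)
      have : k + (j+1) = (k + j) + 1 := by omega
      rw [this]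
      exact le_trans hs (ih (by omega))
  intro i hi
  rcases le_or_gt i k with h | h
  · exact up (k - i) i (by omega)
  · have := down (i - k) (by omega)
    simpa [Nat.add_sub_cancel' (le_of_lt h)] using this

lemma pow_le_choose {n k : ℕ} (hk : k ≤ n) :
    n^n ≤ (n+1) * (n.choose k * k^k * (n-k)^(n-k)) := by
  have h0 : (k + (n-k))^n = ∑ i ∈ range (n+1), k^i * (n-k)^(n-i) * n.choose i :=
    add_pow k (n-k) n
  have hsum : ∑ i ∈ range (n+1), k^i * (n-k)^(n-i) * n.choose i
      ≤ (n+1) * (n.choose k * k^k * (n-k)^(n-k)) := by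
    calc ∑ i ∈ range (n+1), k^i * (n-k)^(n-i) * n.choose i
        = ∑ i ∈ range (n+1), trm n k i := by
          apply Finset.sum_congr rfl; intro i _; unfold trm; ring
      _ ≤ (range (n+1)).card • trm n k k := by
          apply Finset.sum_le_card_nsmul
          intro i hi
          exact term_le hk i (by simpa using Nat.lt_succ_iff.mp (Finset.mem_range.mp hi))
      _ = (n+1) * (n.choose k * k^k * (n-k)^(n-k)) := by
          simp [trm, smul_eq_mul]
  calc n^n = (k + (n-k))^n := by rw [Nat.add_sub_cancel' hk]
    _ ≤ _ := h0 ▸ hsum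

lemma logb_nat_nonneg (n : ℕ) : 0 ≤ Real.logb 2 n := by
  rcases Nat.eq_zero_or_pos n with h | h
  · simp [h]
  · exact Real.logb_nonneg one_lt_two (by exact_mod_cast h)

lemma binent_frac (m k : ℕ) (hk : k ≤ m) (hm : 0 < m) :
    (m:ℝ) * binent ((k:ℝ)/m) =
      (m:ℝ) * Real.logb 2 m - (k:ℝ) * Real.logb 2 k - ((m-k:ℕ):ℝ) * Real.logb 2 ((m-k:ℕ):ℝ) := by
  have hm0 : (m:ℝ) ≠ 0 := by positivity
  have hsub : ((m-k:ℕ):ℝ) = (m:ℝ) - k := by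
    push_cast [Nat.cast_sub hk]; ring
  have h1 : 1 - (k:ℝ)/m = ((m-k:ℕ):ℝ)/m := by
    rw [hsub]; field_simp
  rcases Nat.eq_zero_or_pos k with h0 | hkpos
  · subst h0
    simp [binent, Real.logb, hm0]
  rcases eq_or_lt_of_le hk with he | hlt
  · subst he
    simp [binent, Real.logb, hm0, div_self hm0]
  · have hmk : 0 < m - k := by omega
    have hk0 : (k:ℝ) ≠ 0 := by positivity
    have hmk0 : ((m-k:ℕ):ℝ) ≠ 0 := by
      have : (0:ℝ) < ((m-k:ℕ):ℝ) := by exact_mod_cast hmk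
      positivity
    rw [binent, h1, Real.logb_div hk0 hm0, Real.logb_div hmk0 hm0]
    field_simp
    push_cast [hsub]
    ring

lemma choose_entropy (m k : ℕ) (hk : k ≤ m) (hm : 0 < m) :
    (m:ℝ) * binent ((k:ℝ)/m) ≤ Real.logb 2 (m.choose k) + Real.logb 2 (m+1) := by
  have hnat := pow_le_choose hk
  have hcast : ((m:ℝ))^m ≤ ((m:ℕ)+1 : ℝ) * ((m.choose k : ℝ) * (k:ℝ)^k * ((m-k:ℕ):ℝ)^(m-k)) := by
    exact_mod_cast hnat
  have hchoose : (0:ℝ) < (m.choose k : ℝ) := by exact_mod_cast Nat.choose_pos hk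
  have hkk : (0:ℝ) < (k:ℝ)^k := by
    rcases Nat.eq_zero_or_pos k with h|h
    · simp [h]
    · positivity
  have hmkk : (0:ℝ) < ((m-k:ℕ):ℝ)^(m-k) := by
    rcases Nat.eq_zero_or_pos (m-k) with h|h
    · simp [h]
    · have : (0:ℝ) < ((m-k:ℕ):ℝ) := by exact_mod_cast h
      positivity
  have hmm : (0:ℝ) < (m:ℝ)^m := by positivity
  have hlog := Real.logb_le_logb_of_le (b := 2) one_lt_two hmm hcast
  rw [Real.logb_pow] at hlog
  rw [Real.logb_mul (by positivity) (by positivity),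
    Real.logb_mul (by positivity) (by positivity),
    Real.logb_mul (by positivity) (by positivity),
    Real.logb_pow, Real.logb_pow] at hlog
  rw [binent_frac m k hk hm]
  have hc : ((m:ℝ)+1) = ((m+1:ℕ):ℝ) := by push_cast; ring
  rw [hc] at hlog
  rw [hc]
  linarith [hlog]

-- support

def supp {n : ℕ} (v : Fin n → Bool) : Finset (Fin n) := Finset.univ.filter fun j => v j = true

lemma wt_eq_card_supp {n : ℕ} (v : Fin n → Bool) : wt v = (supp v).card := rfl

lemma hammingDist_eq {n : ℕ} (x y : Fin n → Bool) :
    hammingDist x y = (Finset.univ.filter fun i => x i ≠ y i).card := rfl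

-- block flip
def blockFlip {L : ℕ} (v : Fin L → Bool) (AB : Finset (Fin L) × Finset (Fin L)) :
    Fin L → Bool :=
  fun j => if j ∈ AB.1 then false else if j ∈ AB.2 then true else v j

section Block
variable {L : ℕ} (v : Fin L → Bool) (A B : Finset (Fin L))

lemma supp_blockFlip (hA : A ⊆ supp v) (hB : B ⊆ (supp v)ᶜ) :
    supp (blockFlip v (A, B)) = (supp v \ A) ∪ B := by
  ext j
  have hAv : j ∈ A → v j = true := fun h => (mem_filter.mp (hA h)).2
  have hBv : j ∈ B → ¬ v j = true := fun h => by
    have := hB h; rw [mem_compl] at this; intro hv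
    exact this (mem_filter.mpr ⟨mem_univ _, hv⟩)
  simp only [supp, blockFlip, mem_filter, mem_univ, true_and, mem_union, mem_sdiff]
  by_cases hjA : j ∈ A <;> by_cases hjB : j ∈ B <;>
    simp [hjA, hjB] <;> tauto

lemma wt_blockFlip (hA : A ⊆ supp v) (hB : B ⊆ (supp v)ᶜ) :
    wt (blockFlip v (A, B)) = wt v - A.card + B.card := by
  have hdisj : Disjoint (supp v \ A) B := by
    apply Finset.disjoint_left.mpr
    intro a ha hb
    exact absurd (mem_sdiff.mp ha).1 (by simpa using hB hb)
  rw [wt_eq_card_supp, supp_blockFlip v A B hA hB, Finset.card_union_of_disjoint hdisj,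
    Finset.card_sdiff_of_subset hA, wt_eq_card_supp]

lemma hdist_blockFlip (hA : A ⊆ supp v) (hB : B ⊆ (supp v)ᶜ) :
    hammingDist v (blockFlip v (A, B)) = A.card + B.card := by
  have hset : (Finset.univ.filter fun j => v j ≠ blockFlip v (A, B) j) = A ∪ B := by
    ext j
    have hAv : j ∈ A → v j = true := fun h => (mem_filter.mp (hA h)).2
    have hBv : j ∈ B → ¬ v j = true := fun h => by
      have := hB h; rw [mem_compl] at this; intro hv
      exact this (mem_filter.mpr ⟨mem_univ _, hv⟩)
    simp only [mem_filter, mem_univ, true_and, mem_union, blockFlip]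
    by_cases hjA : j ∈ A <;> by_cases hjB : j ∈ B
    · exact absurd (hAv hjA) (hBv hjB)
    · simp [hjA, hjB, hAv hjA]
    · simpa [hjA, hjB] using fun h => (hBv hjB) h
    · simp [hjA, hjB]
  have hdisj : Disjoint A B := by
    apply Finset.disjoint_left.mpr
    intro a ha hb
    exact absurd ((mem_filter.mp (hA ha)).2) (by
      have := hB hb; rw [mem_compl] at this
      intro hv; exact this (mem_filter.mpr ⟨mem_univ _, hv⟩))
  rw [hammingDist_eq, hset, Finset.card_union_of_disjoint hdisj]

lemma recover_A (hA : A ⊆ supp v) (hB : B ⊆ (supp v)ᶜ) :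
    supp v \ supp (blockFlip v (A, B)) = A := by
  rw [supp_blockFlip v A B hA hB]
  ext j
  have h1 : j ∈ A → j ∈ supp v := fun h => hA h
  have h2 : j ∈ B → j ∉ supp v := fun h => by simpa using hB h
  simp only [Finset.mem_sdiff, Finset.mem_union]
  tauto

lemma recover_B (hA : A ⊆ supp v) (hB : B ⊆ (supp v)ᶜ) :
    supp (blockFlip v (A, B)) \ supp v = B := by
  rw [supp_blockFlip v A B hA hB]
  ext j
  have h1 : j ∈ A → j ∈ supp v := fun h => hA h
  have h2 : j ∈ B → j ∉ supp v := fun h => by simpa using hB h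
  simp only [Finset.mem_sdiff, Finset.mem_union]
  tauto

end Block

section Decomp
variable {m L : ℕ}

def pidx (hL : 0 < L) (p : Fin (m * L)) : Fin m :=
  ⟨p.val / L, Nat.div_lt_of_lt_mul (p.isLt.trans_eq (Nat.mul_comm m L))⟩

def pjdx (hL : 0 < L) (p : Fin (m * L)) : Fin L :=
  ⟨p.val % L, Nat.mod_lt _ hL⟩

lemma subIdx_pidx (hL : 0 < L) (p : Fin (m * L)) :
    subIdx m L (pidx hL p) (pjdx hL p) = p := by
  apply Fin.ext
  simp only [subIdx, pidx, pjdx]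
  rw [Nat.mul_comm (p.val / L) L]
  exact Nat.div_add_mod _ _

lemma pidx_subIdx (hL : 0 < L) (i : Fin m) (j : Fin L) :
    pidx hL (subIdx m L i j) = i := by
  apply Fin.ext
  simp only [pidx, subIdx]
  rw [Nat.add_comm, Nat.add_mul_div_right _ _ hL, Nat.div_eq_of_lt j.isLt, Nat.zero_add]

lemma pjdx_subIdx (hL : 0 < L) (i : Fin m) (j : Fin L) :
    pjdx hL (subIdx m L i j) = j := by
  apply Fin.ext
  simp only [pjdx, subIdx]
  rw [Nat.add_comm, Nat.add_mul_mod_self_right, Nat.mod_eq_of_lt j.isLt]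

lemma filter_card_decomp (hL : 0 < L) (P : Fin (m * L) → Prop) [DecidablePred P] :
    (Finset.univ.filter P).card
      = ∑ i : Fin m, (Finset.univ.filter fun j : Fin L => P (subIdx m L i j)).card := by
  rw [← Finset.card_sigma]
  refine Finset.card_bij' (fun p _ => ⟨pidx hL p, pjdx hL p⟩)
    (fun a _ => subIdx m L a.1 a.2) ?_ ?_ ?_ ?_
  · intro p hp
    simp only [mem_filter, mem_univ, true_and] at hp
    simp only [Finset.mem_sigma, mem_filter, mem_univ, true_and]
    rw [subIdx_pidx hL p]
    exact hp
  · rintro ⟨i, j⟩ ha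
    simp only [Finset.mem_sigma, mem_filter, mem_univ, true_and] at ha ⊢
    exact ha
  · intro p _
    simp [subIdx_pidx hL p]
  · rintro ⟨i, j⟩ _
    simp only
    congr 1 <;> simp [pidx_subIdx hL, pjdx_subIdx hL]

lemma hammingDist_decomp (hL : 0 < L) (x y : Fin (m * L) → Bool) :
    hammingDist x y = ∑ i : Fin m, hammingDist (subblock m L x i) (subblock m L y i) := by
  rw [hammingDist_eq]
  rw [filter_card_decomp hL (fun p => x p ≠ y p)]
  rfl

end Decomp

section Ball
variable {m L w : ℕ}

def glob (hL : 0 < L) (x : Fin (m * L) → Bool)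
    (g : Fin m → Finset (Fin L) × Finset (Fin L)) : Fin (m * L) → Bool :=
  fun p => blockFlip (subblock m L x (pidx hL p)) (g (pidx hL p)) (pjdx hL p)

lemma subblock_glob (hL : 0 < L) (x : Fin (m * L) → Bool)
    (g : Fin m → Finset (Fin L) × Finset (Fin L)) (i : Fin m) :
    subblock m L (glob hL x g) i = blockFlip (subblock m L x i) (g i) := by
  funext j
  simp only [subblock, glob, pidx_subIdx hL, pjdx_subIdx hL]

def DF (m L : ℕ) (x : Fin (m * L) → Bool) (u : Fin m → ℕ) :
    Finset (Fin m → Finset (Fin L) × Finset (Fin L)) :=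
  Fintype.piFinset fun i =>
    (supp (subblock m L x i)).powersetCard (u i) ×ˢ
      ((supp (subblock m L x i))ᶜ).powersetCard (u i)

lemma card_DF (x : Fin (m * L) → Bool) (hx : ∀ i, wt (subblock m L x i) = w)
    (u : Fin m → ℕ) :
    (DF m L x u).card = ∏ i, (w.choose (u i) * (L - w).choose (u i)) := by
  rw [DF, Fintype.card_piFinset]
  apply Finset.prod_congr rfl
  intro i _
  rw [Finset.card_product, Finset.card_powersetCard, Finset.card_powersetCard,
    Finset.card_compl, ← wt_eq_card_supp, hx i]
  congr 2
  simp [Fintype.card_fin]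

lemma mem_DF_spec (x : Fin (m * L) → Bool) (u : Fin m → ℕ)
    {g : Fin m → Finset (Fin L) × Finset (Fin L)} (hg : g ∈ DF m L x u) (i : Fin m) :
    (g i).1 ⊆ supp (subblock m L x i) ∧ (g i).1.card = u i ∧
      (g i).2 ⊆ (supp (subblock m L x i))ᶜ ∧ (g i).2.card = u i := by
  rw [DF, Fintype.mem_piFinset] at hg
  have := hg i
  rw [Finset.mem_product, Finset.mem_powersetCard, Finset.mem_powersetCard] at this
  exact ⟨this.1.1, this.1.2, this.2.1, this.2.2⟩

lemma wt_subblock_glob (hL : 0 < L) (x : Fin (m * L) → Bool)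
    (hx : ∀ i, wt (subblock m L x i) = w) (u : Fin m → ℕ) (hu : ∀ i, u i ≤ w)
    {g : Fin m → Finset (Fin L) × Finset (Fin L)} (hg : g ∈ DF m L x u) (i : Fin m) :
    wt (subblock m L (glob hL x g) i) = w := by
  obtain ⟨h1, h2, h3, h4⟩ := mem_DF_spec x u hg i
  rw [subblock_glob hL, ← Prod.mk.eta (p := g i),
    wt_blockFlip _ _ _ h1 h3, hx i]
  have := hu i
  omega

lemma hdist_subblock_glob (hL : 0 < L) (x : Fin (m * L) → Bool) (u : Fin m → ℕ)
    {g : Fin m → Finset (Fin L) × Finset (Fin L)} (hg : g ∈ DF m L x u) (i : Fin m) :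
    hammingDist (subblock m L x i) (subblock m L (glob hL x g) i) = 2 * u i := by
  obtain ⟨h1, h2, h3, h4⟩ := mem_DF_spec x u hg i
  rw [subblock_glob hL, ← Prod.mk.eta (p := g i),
    hdist_blockFlip _ _ _ h1 h3]
  omega

lemma glob_injOn (hL : 0 < L) (x : Fin (m * L) → Bool) (u : Fin m → ℕ) :
    Set.InjOn (glob hL x) (DF m L x u) := by
  intro g hg g' hg' heq
  funext i
  obtain ⟨h1, h2, h3, h4⟩ := mem_DF_spec x u hg i
  obtain ⟨h1', h2', h3', h4'⟩ := mem_DF_spec x u hg' i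
  have hsub : blockFlip (subblock m L x i) (g i) = blockFlip (subblock m L x i) (g' i) := by
    rw [← subblock_glob hL x g i, ← subblock_glob hL x g' i, heq]
  have e1 : (g i).1 = (g' i).1 := by
    rw [← recover_A _ _ _ h1 h3, ← recover_A _ _ _ h1' h3']
    rw [Prod.mk.eta, Prod.mk.eta, hsub]
  have e2 : (g i).2 = (g' i).2 := by
    rw [← recover_B _ _ _ h1 h3, ← recover_B _ _ _ h1' h3']
    rw [Prod.mk.eta, Prod.mk.eta, hsub]
  exact Prod.ext e1 e2

def ballF (m L w : ℕ) (x : Fin (m * L) → Bool) (t : ℕ) : Finset (Fin (m * L) → Bool) :=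
  Finset.univ.filter fun y =>
    (∀ i, wt (subblock m L y i) = w) ∧ hammingDist x y ≤ t

def YF (m L w : ℕ) (x : Fin (m * L) → Bool) (K : Finset (Fin m)) (v0 v1 : ℕ) :
    Finset (Fin (m * L) → Bool) :=
  Finset.univ.filter fun y =>
    (∀ i, wt (subblock m L y i) = w) ∧
      ∀ i, hammingDist (subblock m L x i) (subblock m L y i)
        = 2 * (if i ∈ K then v1 else v0)

lemma card_YF_ge (hL : 0 < L) (x : Fin (m * L) → Bool)
    (hx : ∀ i, wt (subblock m L x i) = w) (K : Finset (Fin m)) (v0 v1 : ℕ)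
    (hv0 : v0 ≤ w) (hv1 : v1 ≤ w) :
    ∏ i, (w.choose (if i ∈ K then v1 else v0) * (L - w).choose (if i ∈ K then v1 else v0))
      ≤ (YF m L w x K v0 v1).card := by
  set u : Fin m → ℕ := fun i => if i ∈ K then v1 else v0 with hu_def
  have hu : ∀ i, u i ≤ w := by intro i; by_cases h : i ∈ K <;> simp [hu_def, h, hv0, hv1]
  rw [← card_DF x hx u]
  apply Finset.card_le_card_of_injOn (glob hL x)
  · intro g hg
    rw [YF, Finset.mem_coe, Finset.mem_filter]
    refine ⟨Finset.mem_univ _, fun i => wt_subblock_glob hL x hx u hu hg i,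
      fun i => hdist_subblock_glob hL x u hg i⟩
  · exact glob_injOn hL x u

lemma YF_subset_ballF (hL : 0 < L) (x : Fin (m * L) → Bool) (K : Finset (Fin m))
    (v0 v1 t : ℕ) (hcon : 2 * ∑ i, (if i ∈ K then v1 else v0) ≤ t) :
    YF m L w x K v0 v1 ⊆ ballF m L w x t := by
  intro y hy
  rw [YF, Finset.mem_filter] at hy
  rw [ballF, Finset.mem_filter]
  refine ⟨Finset.mem_univ _, hy.2.1, ?_⟩
  rw [hammingDist_decomp hL]
  calc ∑ i, hammingDist (subblock m L x i) (subblock m L y i)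
      = ∑ i, 2 * (if i ∈ K then v1 else v0) := Finset.sum_congr rfl fun i _ => hy.2.2 i
    _ = 2 * ∑ i, (if i ∈ K then v1 else v0) := by rw [Finset.mul_sum]
    _ ≤ t := hcon

lemma YF_disjoint (x : Fin (m * L) → Bool) (v0 v1 : ℕ) (hne : v0 ≠ v1)
    (K K' : Finset (Fin m)) (hKK' : K ≠ K') :
    Disjoint (YF m L w x K v0 v1) (YF m L w x K' v0 v1) := by
  rw [Finset.disjoint_left]
  intro y hy hy'
  rw [YF, Finset.mem_filter] at hy hy'
  apply hKK'
  ext i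
  have h1 := hy.2.2 i
  have h2 := hy'.2.2 i
  by_cases hK : i ∈ K <;> by_cases hK' : i ∈ K' <;> simp [hK, hK'] at h1 h2 ⊢ <;> omega

lemma ball_count (hL : 0 < L) (x : Fin (m * L) → Bool)
    (hx : ∀ i, wt (subblock m L x i) = w) (k t v0 v1 : ℕ) (hk : k ≤ m)
    (hv0 : v0 ≤ w) (hv1 : v1 ≤ w) (hne : v0 ≠ v1)
    (hcon : 2 * (k * v1 + (m - k) * v0) ≤ t) :
    m.choose k * ((w.choose v1 * (L - w).choose v1) ^ k
        * (w.choose v0 * (L - w).choose v0) ^ (m - k))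
      ≤ (ballF m L w x t).card := by
  classical
  set c : Finset (Fin m) → ℕ := fun K =>
    ∏ i, (w.choose (if i ∈ K then v1 else v0) * (L - w).choose (if i ∈ K then v1 else v0))
  have hcK : ∀ K ∈ Finset.powersetCard k (Finset.univ : Finset (Fin m)),
      c K = (w.choose v1 * (L - w).choose v1) ^ k
        * (w.choose v0 * (L - w).choose v0) ^ (m - k) := by
    intro K hK
    rw [Finset.mem_powersetCard] at hK
    have hKc : K.card = k := hK.2
    have hcc : c K = (∏ i ∈ K, (w.choose v1 * (L - w).choose v1))
        * ∏ i ∈ Kᶜ, (w.choose v0 * (L - w).choose v0) := by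
      show (∏ i, _) = _
      rw [← Finset.prod_mul_prod_compl K]
      congr 1
      · exact Finset.prod_congr rfl fun i hi => by simp [hi]
      · exact Finset.prod_congr rfl fun i hi => by simp [Finset.mem_compl.mp hi]
    rw [hcc, Finset.prod_const, Finset.prod_const, Finset.card_compl,
      Fintype.card_fin, hKc]
  have hsum : ∀ K ∈ Finset.powersetCard k (Finset.univ : Finset (Fin m)),
      2 * ∑ i, (if i ∈ K then v1 else v0) ≤ t := by
    intro K hK
    rw [Finset.mem_powersetCard] at hK
    have : ∑ i, (if i ∈ K then v1 else v0) = k * v1 + (m - k) * v0 := by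
      rw [← Finset.sum_add_sum_compl K]
      rw [Finset.sum_congr rfl (fun i hi => if_pos hi),
        Finset.sum_congr rfl (fun i (hi : i ∈ Kᶜ) => if_neg (Finset.mem_compl.mp hi)),
        Finset.sum_const, Finset.sum_const, Finset.card_compl, Fintype.card_fin,
        hK.2, smul_eq_mul, smul_eq_mul]
    omega
  calc m.choose k * ((w.choose v1 * (L - w).choose v1) ^ k
        * (w.choose v0 * (L - w).choose v0) ^ (m - k))
      = ∑ K ∈ Finset.powersetCard k (Finset.univ : Finset (Fin m)), c K := by
        rw [Finset.sum_congr rfl hcK, Finset.sum_const, Finset.card_powersetCard,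
          Finset.card_univ, Fintype.card_fin, smul_eq_mul]
    _ ≤ ∑ K ∈ Finset.powersetCard k (Finset.univ : Finset (Fin m)),
          (YF m L w x K v0 v1).card := by
        apply Finset.sum_le_sum
        intro K _
        exact card_YF_ge hL x hx K v0 v1 hv0 hv1
    _ = ((Finset.powersetCard k (Finset.univ : Finset (Fin m))).biUnion
          (fun K => YF m L w x K v0 v1)).card := by
        rw [Finset.card_biUnion]
        intro K hK K' hK' hne'
        exact YF_disjoint x v0 v1 hne K K' hne'
    _ ≤ (ballF m L w x t).card := by
        apply Finset.card_le_card
        intro y hy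
        rw [Finset.mem_biUnion] at hy
        obtain ⟨K, hK, hyK⟩ := hy
        exact YF_subset_ballF hL x K v0 v1 t (hsum K hK) hyK

end Ball

section Packing
variable {m L w : ℕ}


lemma card_wt_filter (L w : ℕ) :
    ((Finset.univ : Finset (Fin L → Bool)).filter fun v => wt v = w).card = L.choose w := by
  classical
  have : L.choose w = (Finset.powersetCard w (Finset.univ : Finset (Fin L))).card := by
    rw [Finset.card_powersetCard, Finset.card_univ, Fintype.card_fin]
  rw [this]
  refine Finset.card_bij' (fun v _ => supp v) (fun s _ => fun a => decide (a ∈ s)) ?_ ?_ ?_ ?_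
  · intro v hv
    rw [Finset.mem_filter] at hv
    rw [Finset.mem_powersetCard]
    exact ⟨Finset.subset_univ _, by rw [← wt_eq_card_supp]; exact hv.2⟩
  · intro s hs
    rw [Finset.mem_powersetCard] at hs
    rw [Finset.mem_filter]
    refine ⟨Finset.mem_univ _, ?_⟩
    rw [wt_eq_card_supp]
    have : supp (fun a => decide (a ∈ s)) = s := by
      ext a; simp [supp]
    rw [this, hs.2]
  · intro v _
    funext a
    simp only [supp, Finset.mem_filter, Finset.mem_univ, true_and]
    cases h : v a <;> simp [h]
  · intro s _
    ext a; simp [supp]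

lemma card_space_le (hL : 0 < L) :
    ((Finset.univ : Finset (Fin (m * L) → Bool)).filter
        fun y => ∀ i, wt (subblock m L y i) = w).card ≤ (L.choose w) ^ m := by
  classical
  set SpF := (Finset.univ : Finset (Fin (m * L) → Bool)).filter
    fun y => ∀ i, wt (subblock m L y i) = w with hSpF
  set Φ : (Fin (m * L) → Bool) → (Fin m → Fin L → Bool) := fun y i => subblock m L y i with hΦ
  have hinj : Set.InjOn Φ ↑SpF := by
    intro y _ y' _ heq
    funext p
    have : subblock m L y (pidx hL p) (pjdx hL p) = subblock m L y' (pidx hL p) (pjdx hL p) := by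
      rw [show subblock m L y (pidx hL p) = Φ y (pidx hL p) from rfl, heq]
    rwa [subblock, subblock, subIdx_pidx hL p] at this
  calc SpF.card = (SpF.image Φ).card := (Finset.card_image_of_injOn hinj).symm
    _ ≤ (Fintype.piFinset fun _ : Fin m =>
          (Finset.univ : Finset (Fin L → Bool)).filter fun v => wt v = w).card := by
        apply Finset.card_le_card
        intro f hf
        rw [Finset.mem_image] at hf
        obtain ⟨y, hy, rfl⟩ := hf
        rw [hSpF, Finset.mem_filter] at hy
        rw [Fintype.mem_piFinset]
        intro i
        rw [Finset.mem_filter]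
        exact ⟨Finset.mem_univ _, hy.2 i⟩
    _ = (L.choose w) ^ m := by
        rw [Fintype.card_piFinset]
        simp [card_wt_filter L w]

lemma packing (hL : 0 < L) {d : ℕ} (C : Finset (Fin (m * L) → Bool))
    (hcode : isCode (CSCCspace m L w) d C) (B : ℕ)
    (hB : ∀ x ∈ C, B ≤ (ballF m L w x ((d - 1) / 2)).card) :
    C.card * B ≤ (L.choose w) ^ m := by
  classical
  set t := (d - 1) / 2 with ht
  have hdisj : ∀ x ∈ C, ∀ y ∈ C, x ≠ y →
      Disjoint (ballF m L w x t) (ballF m L w y t) := by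
    intro x hx y hy hxy
    rw [Finset.disjoint_left]
    intro z hz hz'
    rw [ballF, Finset.mem_filter] at hz hz'
    have h1 : hammingDist x z ≤ t := hz.2.2
    have h2 : hammingDist y z ≤ t := hz'.2.2
    have h3 : d ≤ hammingDist x y := hcode.2 x hx y hy hxy
    have h4 : hammingDist x y ≤ hammingDist x z + hammingDist z y :=
      hammingDist_triangle x z y
    rw [hammingDist_comm z y] at h4
    rcases Nat.eq_zero_or_pos d with hd0 | hdpos
    · have : hammingDist x z = 0 := by omega
      have hxz : x = z := hammingDist_eq_zero.mp this
      have : hammingDist y z = 0 := by omega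
      have hyz : y = z := hammingDist_eq_zero.mp this
      exact hxy (hxz.trans hyz.symm)
    · omega
  calc C.card * B = ∑ _x ∈ C, B := by rw [Finset.sum_const, smul_eq_mul]
    _ ≤ ∑ x ∈ C, (ballF m L w x t).card := Finset.sum_le_sum hB
    _ = (C.biUnion fun x => ballF m L w x t).card := (Finset.card_biUnion hdisj).symm
    _ ≤ ((Finset.univ : Finset (Fin (m * L) → Bool)).filter
          fun y => ∀ i, wt (subblock m L y i) = w).card := by
        apply Finset.card_le_card
        intro z hz
        rw [Finset.mem_biUnion] at hz
        obtain ⟨x, _, hzx⟩ := hz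
        rw [ballF, Finset.mem_filter] at hzx
        rw [Finset.mem_filter]
        exact ⟨Finset.mem_univ _, hzx.2.1⟩
    _ ≤ (L.choose w) ^ m := card_space_le hL

lemma maxCSCC_mul_le (m L w d B : ℕ) (hL : 0 < L)
    (hB : ∀ x : Fin (m * L) → Bool, (∀ i, wt (subblock m L x i) = w) →
      B ≤ (ballF m L w x ((d - 1) / 2)).card) :
    maxCSCC m L d w * B ≤ (L.choose w) ^ m := by
  classical
  have hne : {k | ∃ C : Finset (Fin (m * L) → Bool),
      isCode (CSCCspace m L w) d C ∧ C.card = k}.Nonempty := by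
    exact ⟨0, ∅, ⟨by simp [CSCCspace], by simp⟩, by simp⟩
  have hbdd : BddAbove {k | ∃ C : Finset (Fin (m * L) → Bool),
      isCode (CSCCspace m L w) d C ∧ C.card = k} := by
    refine ⟨Fintype.card (Fin (m * L) → Bool), ?_⟩
    rintro n ⟨C, _, rfl⟩
    exact Finset.card_le_univ C
  obtain ⟨C, hcode, hcard⟩ := Nat.sSup_mem hne hbdd
  rw [maxCSCC, ← hcard]
  apply packing hL C hcode B
  intro x hx
  exact hB x (hcode.1 hx)

theorem main_count (m L w d k v0 v1 : ℕ) (hL : 0 < L) (hk : k ≤ m)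
    (hv0 : v0 ≤ w) (hv1 : v1 ≤ w) (hne : v0 ≠ v1)
    (hcon : 2 * (k * v1 + (m - k) * v0) ≤ (d - 1) / 2) :
    maxCSCC m L d w * (m.choose k * ((w.choose v1 * (L - w).choose v1) ^ k
        * (w.choose v0 * (L - w).choose v0) ^ (m - k)))
      ≤ (L.choose w) ^ m := by
  apply maxCSCC_mul_le m L w d _ hL
  intro x hx
  exact ball_count hL x hx k ((d - 1) / 2) v0 v1 hk hv0 hv1 hne hcon

end Packing

lemma one_le_maxCSCC (m L w d : ℕ) (hw : w < L) : 1 ≤ maxCSCC m L d w := by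
  classical
  have hL : 0 < L := lt_of_le_of_lt (Nat.zero_le w) hw
  set x0 : Fin (m * L) → Bool := fun p => decide (p.val % L < w) with hx0def
  have hmod : ∀ (i : Fin m) (j : Fin L), (i.val * L + j.val) % L = j.val := by
    intro i j
    rw [Nat.add_comm, Nat.add_mul_mod_self_right, Nat.mod_eq_of_lt j.isLt]
  have hx0 : ∀ i, wt (subblock m L x0 i) = w := by
    intro i
    have hfun : subblock m L x0 i = fun j : Fin L => decide (j.val < w) := by
      funext j
      simp only [subblock, hx0def, subIdx]
      rw [hmod i j]
    rw [hfun]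
    show (Finset.univ.filter fun j : Fin L => decide (j.val < w) = true).card = w
    have : (Finset.univ.filter fun j : Fin L => decide (j.val < w) = true)
        = Finset.Iio (⟨w, hw⟩ : Fin L) := by
      ext j
      simp [Fin.lt_def]
    rw [this, Fin.card_Iio]
  have hmem : 1 ∈ {k | ∃ C : Finset (Fin (m * L) → Bool),
      isCode (CSCCspace m L w) d C ∧ C.card = k} := by
    refine ⟨{x0}, ⟨?_, ?_⟩, Finset.card_singleton _⟩
    · intro y hy
      rw [Finset.coe_singleton, Set.mem_singleton_iff] at hy
      subst hy
      exact fun i => hx0 i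
    · intro a ha b hb hab
      rw [Finset.mem_singleton] at ha hb
      exact absurd (ha.trans hb.symm) hab
  have hbdd : BddAbove {k | ∃ C : Finset (Fin (m * L) → Bool),
      isCode (CSCCspace m L w) d C ∧ C.card = k} := by
    refine ⟨Fintype.card (Fin (m * L) → Bool), ?_⟩
    rintro n ⟨C, _, rfl⟩
    exact Finset.card_le_univ C
  exact le_csSup hbdd hmem

lemma binent_eq (p : ℝ) :
    binent p = (Real.negMulLog p + Real.negMulLog (1 - p)) / Real.log 2 := by
  unfold binent Real.negMulLog Real.logb
  have h2 : Real.log 2 ≠ 0 := Real.log_ne_zero_of_pos_of_ne_one two_pos (by norm_num)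
  field_simp
  ring

lemma binent_continuous : Continuous binent := by
  have : Continuous fun p : ℝ => (Real.negMulLog p + Real.negMulLog (1 - p)) / Real.log 2 :=
    (Real.continuous_negMulLog.add
      (Real.continuous_negMulLog.comp (continuous_const.sub continuous_id))).div_const _
  exact this.congr fun p => (binent_eq p).symm

lemma binent_one_sub (p : ℝ) : binent (1 - p) = binent p := by
  unfold binent
  rw [sub_sub_cancel]
  ring

lemma tendsto_logb_succ_div : Tendsto (fun m : ℕ => Real.logb 2 (m + 1) / m) atTop (nhds 0) := by
  have h1 : (fun m : ℕ => Real.log ((m : ℝ) + 1)) =o[atTop] (fun m : ℕ => (m : ℝ) + 1) :=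
    Real.isLittleO_log_id_atTop.comp_tendsto
      (tendsto_atTop_add_const_right atTop 1 tendsto_natCast_atTop_atTop)
  have h2 : (fun m : ℕ => (m : ℝ) + 1) =O[atTop] (fun m : ℕ => (m : ℝ)) := by
    rw [Asymptotics.isBigO_iff]
    refine ⟨2, ?_⟩
    filter_upwards [eventually_ge_atTop 1] with m hm
    have hm1 : (1:ℝ) ≤ (m:ℝ) := by exact_mod_cast hm
    rw [Real.norm_eq_abs, Real.norm_eq_abs, abs_of_nonneg (by linarith), abs_of_nonneg (by linarith)]
    linarith
  have h3 := (h1.trans_isBigO h2).tendsto_div_nhds_zero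
  have h4 : Tendsto (fun m : ℕ => Real.log ((m:ℝ) + 1) / m * (1 / Real.log 2)) atTop (nhds (0 * (1 / Real.log 2))) :=
    h3.mul_const _
  rw [zero_mul] at h4
  apply h4.congr
  intro m
  rw [Real.logb]
  ring

end Aux

set_option maxHeartbeats 2000000 in
/-- Asymptotic sphere-packing bound for CSCCs (`L ≥ 2`, `0 < δ < δ*`). -/
theorem stmt_13 (L w : ℕ) (hL : 2 ≤ L) (hw1 : 1 ≤ w) (hw2 : w ≤ L - 1)
    (δ : ℝ) (hδ0 : 0 < δ)
    (hδ : δ < 2 * ((w : ℝ) / L) * (1 - (w : ℝ) / L)) :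
    gammaRate L δ w ≤
      (1 / (L : ℝ)) * Real.logb 2 (L.choose w)
      - ((↑⌈δ * (L : ℝ) / 4⌉₊ - δ * (L : ℝ) / 4) / (L : ℝ)) *
          Real.logb 2 (w.choose ⌊δ * (L : ℝ) / 4⌋₊)
      - ((1 + δ * (L : ℝ) / 4 - ↑⌈δ * (L : ℝ) / 4⌉₊) / (L : ℝ)) *
          Real.logb 2 (w.choose ⌈δ * (L : ℝ) / 4⌉₊)
      - ((↑⌈δ * (L : ℝ) / 4⌉₊ - δ * (L : ℝ) / 4) / (L : ℝ)) *
          Real.logb 2 ((L - w).choose ⌊δ * (L : ℝ) / 4⌋₊)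
      - ((1 + δ * (L : ℝ) / 4 - ↑⌈δ * (L : ℝ) / 4⌉₊) / (L : ℝ)) *
          Real.logb 2 ((L - w).choose ⌈δ * (L : ℝ) / 4⌉₊)
      - (1 / (L : ℝ)) * binent (↑⌈δ * (L : ℝ) / 4⌉₊ - δ * (L : ℝ) / 4) := by
  classical
  have hL0 : 0 < L := by omega
  have hLR : (0:ℝ) < L := by exact_mod_cast hL0
  have hLne : (L:ℝ) ≠ 0 := ne_of_gt hLR
  have hwL : w < L := by omega
  have hwLR : (w:ℝ) < L := by exact_mod_cast hwL
  have hw0R : (0:ℝ) < w := by exact_mod_cast hw1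
  set ut : ℝ := δ * (L:ℝ) / 4 with hut_def
  have hut0 : 0 < ut := by rw [hut_def]; positivity
  set u1 : ℕ := ⌈ut⌉₊ with hu1_def
  have hu11 : 1 ≤ u1 := by rw [hu1_def]; exact Nat.ceil_pos.mpr hut0
  set v0 : ℕ := u1 - 1 with hv0_def
  have hv0R : (v0:ℝ) = (u1:ℝ) - 1 := by
    rw [hv0_def, Nat.cast_sub hu11]; norm_num
  have hkey : δ * L * L < 2 * w * ((L:ℝ) - w) := by
    have h := mul_lt_mul_of_pos_right hδ (mul_pos hLR hLR)
    have hR : 2 * ((w:ℝ)/L) * (1 - (w:ℝ)/L) * ((L:ℝ)*L) = 2*w*((L:ℝ)-w) := by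
      field_simp
    calc δ * L * L = δ * ((L:ℝ)*L) := by ring
      _ < 2 * ((w:ℝ)/L) * (1 - (w:ℝ)/L) * ((L:ℝ)*L) := h
      _ = 2*w*((L:ℝ)-w) := hR
  have hutw2 : ut < (w:ℝ)/2 := by
    rw [hut_def]
    rw [div_lt_div_iff₀ (by norm_num) (by norm_num : (0:ℝ) < 2)]
    nlinarith [hkey, hw0R, hwLR, hLR]
  have hutLw2 : ut < ((L:ℝ) - w)/2 := by
    rw [hut_def]
    rw [div_lt_div_iff₀ (by norm_num) (by norm_num : (0:ℝ) < 2)]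
    nlinarith [hkey, hw0R, hwLR, hLR]
  have hu1w : u1 ≤ w := by
    rw [hu1_def]; exact Nat.ceil_le.mpr (by linarith)
  have hLwR : ((L - w : ℕ):ℝ) = (L:ℝ) - w := by
    rw [Nat.cast_sub (le_of_lt hwL)]
  have hu1Lw : u1 ≤ L - w := by
    rw [hu1_def]; exact Nat.ceil_le.mpr (by rw [hLwR]; linarith)
  set al : ℝ := (u1:ℝ) - ut with hal_def
  set be : ℝ := 1 + ut - (u1:ℝ) with hbe_def
  have hal0 : 0 ≤ al := by rw [hal_def, hu1_def]; linarith [Nat.le_ceil ut]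
  have hbe0 : 0 < be := by
    rw [hbe_def, hu1_def]; linarith [Nat.ceil_lt_add_one (le_of_lt hut0)]
  have hbe1 : be ≤ 1 := by rw [hbe_def]; linarith
  have hbal : be = 1 - al := by rw [hbe_def, hal_def]; ring
  set a0 : ℕ := w.choose v0 * (L - w).choose v0 with ha0_def
  set a1 : ℕ := w.choose u1 * (L - w).choose u1 with ha1_def
  have hv0w : v0 ≤ w := by omega
  have hv0Lw : v0 ≤ L - w := by omega
  have ha0pos : 0 < a0 := by
    rw [ha0_def]; exact Nat.mul_pos (Nat.choose_pos hv0w) (Nat.choose_pos hv0Lw)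
  have ha1pos : 0 < a1 := by
    rw [ha1_def]; exact Nat.mul_pos (Nat.choose_pos hu1w) (Nat.choose_pos hu1Lw)
  set cL : ℕ := L.choose w with hcL_def
  have hcLpos : 0 < cL := by rw [hcL_def]; exact Nat.choose_pos (le_of_lt hwL)
  set kf : ℕ → ℕ := fun m => ⌊be * m⌋₊ - 2 with hkf_def
  have hkfm : ∀ m : ℕ, kf m ≤ m := by
    intro m
    have h1 : ⌊be * m⌋₊ ≤ m := by
      have h2 : be * m ≤ ((m:ℕ):ℝ) := by nlinarith [Nat.cast_nonneg (α := ℝ) m]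
      calc ⌊be*(m:ℝ)⌋₊ ≤ ⌊((m:ℕ):ℝ)⌋₊ := Nat.floor_le_floor h2
        _ = m := Nat.floor_natCast m
    simp only [hkf_def]
    omega
  set lga0 : ℝ := Real.logb 2 a0 with hlga0_def
  set lga1 : ℝ := Real.logb 2 a1 with hlga1_def
  set lgc : ℝ := Real.logb 2 cL with hlgc_def
  set G : ℕ → ℝ := fun m => (1/(L:ℝ)) * lgc - (1/(L:ℝ)) * binent ((kf m : ℝ)/m)
      + (1/(L:ℝ)) * (Real.logb 2 (m+1)/m)
      - (1/(L:ℝ)) * (((m:ℝ) - kf m)/m * lga0)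
      - (1/(L:ℝ)) * ((kf m:ℝ)/m * lga1) with hG_def
  -- eventual facts
  have htt : Tendsto (fun m : ℕ => be * m) atTop atTop :=
    Tendsto.const_mul_atTop hbe0 tendsto_natCast_atTop_atTop
  have hev2 : ∀ᶠ m : ℕ in atTop, 2 ≤ ⌊be * (m:ℝ)⌋₊ ∧ 1 ≤ m := by
    filter_upwards [htt.eventually_ge_atTop 2, eventually_ge_atTop 1] with m h1 h2
    exact ⟨Nat.le_floor (by exact_mod_cast h1), h2⟩
  -- Step 1 : eventual bound
  have hfG : ∀ᶠ m : ℕ in atTop,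
      Real.logb 2 (maxCSCC m L ⌊(m:ℝ) * L * δ⌋₊ w) / ((m:ℝ) * L) ≤ G m := by
    filter_upwards [hev2] with m hm
    obtain ⟨hm2, hm1⟩ := hm
    have hmR : (0:ℝ) < m := by exact_mod_cast hm1
    have hmne : (m:ℝ) ≠ 0 := ne_of_gt hmR
    set d : ℕ := ⌊(m:ℝ) * L * δ⌋₊ with hd_def
    set km : ℕ := kf m with hkm_def
    have hkmm : km ≤ m := hkfm m
    have hkmR : (km:ℝ) ≤ be * m - 2 := by
      have h3 : (km:ℝ) = (⌊be * (m:ℝ)⌋₊ : ℝ) - 2 := by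
        rw [hkm_def, hkf_def]
        push_cast [Nat.cast_sub hm2]
        ring
      rw [h3]
      have := Nat.floor_le (show (0:ℝ) ≤ be * m by positivity)
      linarith
    have hsum_id : km * u1 + (m - km) * v0 = m * v0 + km := by
      have e1 : u1 = v0 + 1 := by omega
      have e2 : (m - km) * v0 = m * v0 - km * v0 := Nat.sub_mul _ _ _
      have e3 : km * v0 ≤ m * v0 := Nat.mul_le_mul_right _ hkmm
      have e4 : km * u1 = km * v0 + km := by rw [e1]; ring
      omega
    have hdge : ((4 * (m * v0 + km) + 1 : ℕ) : ℝ) ≤ (d:ℝ) := by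
      have hd1 : (m:ℝ)*L*δ - 1 < (d:ℝ) := by
        rw [hd_def]; exact Nat.sub_one_lt_floor _
      have hmut : (m:ℝ)*L*δ = 4 * ((m:ℝ) * ut) := by rw [hut_def]; ring
      have hexp : (m:ℝ)*((u1:ℝ)-1) + (be*m - 2) = (m:ℝ) * ut - 2 := by
        rw [hbe_def]; ring
      have hkv : (m:ℝ)*(v0:ℝ) + km ≤ (m:ℝ) * ut - 2 := by
        rw [hv0R]; linarith
      push_cast
      linarith
    have hcon : 2 * (km * u1 + (m - km) * v0) ≤ (d - 1)/2 := by
      rw [hsum_id, Nat.le_div_iff_mul_le (by norm_num : 0 < 2)]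
      have h4 : 4 * (m * v0 + km) + 1 ≤ d := by exact_mod_cast hdge
      omega
    have hNB := main_count m L w d km v0 u1 hL0 hkmm hv0w hu1w (by omega) hcon
    set N : ℕ := maxCSCC m L d w with hN_def
    have hN1 : 1 ≤ N := one_le_maxCSCC m L w d hwL
    set B : ℕ := m.choose km * ((w.choose u1 * (L-w).choose u1)^km
      * (w.choose v0 * (L-w).choose v0)^(m - km)) with hB_def
    have hchpos : 0 < m.choose km := Nat.choose_pos hkmm
    have hB1 : 1 ≤ B := by
      rw [hB_def]
      have h5 : 0 < (w.choose u1 * (L-w).choose u1)^km := Nat.pow_pos (by rw [← ha1_def]; exact ha1pos)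
      have h6 : 0 < (w.choose v0 * (L-w).choose v0)^(m-km) := Nat.pow_pos (by rw [← ha0_def]; exact ha0pos)
      exact Nat.mul_pos hchpos (Nat.mul_pos h5 h6)
    have hNBR : (N:ℝ) * B ≤ ((cL:ℝ))^m := by
      rw [hcL_def]
      exact_mod_cast hNB
    have hNR : (1:ℝ) ≤ N := by exact_mod_cast hN1
    have hBR : (1:ℝ) ≤ B := by exact_mod_cast hB1
    have hlogNB : Real.logb 2 N + Real.logb 2 B ≤ (m:ℝ) * lgc := by
      have h7 := Real.logb_le_logb_of_le (b := 2) one_lt_two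
        (mul_pos (by linarith : (0:ℝ) < (N:ℝ)) (by linarith : (0:ℝ) < (B:ℝ))) hNBR
      rw [Real.logb_mul (by linarith) (by linarith), Real.logb_pow] at h7
      rw [hlgc_def]
      exact h7
    have hBeq : Real.logb 2 B = Real.logb 2 (m.choose km) + (km:ℝ) * lga1
        + ((m:ℝ) - km) * lga0 := by
      have hc1 : ((w.choose u1 * (L-w).choose u1 : ℕ):ℝ) ≠ 0 := by
        have : (0:ℕ) < w.choose u1 * (L-w).choose u1 := by rw [← ha1_def]; exact ha1pos
        positivity
      have hc0 : ((w.choose v0 * (L-w).choose v0 : ℕ):ℝ) ≠ 0 := by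
        have : (0:ℕ) < w.choose v0 * (L-w).choose v0 := by rw [← ha0_def]; exact ha0pos
        positivity
      have hchne : ((m.choose km : ℕ):ℝ) ≠ 0 := by positivity
      have hBcast : (B:ℝ) = (m.choose km : ℝ)
          * (((w.choose u1 * (L-w).choose u1 : ℕ):ℝ)^km
            * ((w.choose v0 * (L-w).choose v0 : ℕ):ℝ)^(m-km)) := by
        rw [hB_def]; push_cast; ring
      rw [hBcast, Real.logb_mul hchne (by positivity),
        Real.logb_mul (by positivity) (by positivity),
        Real.logb_pow, Real.logb_pow, hlga1_def, hlga0_def, ha1_def, ha0_def,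
        Nat.cast_sub hkmm]
      push_cast
      ring
    have hent := choose_entropy m km hkmm (by omega)
    have hfinal : Real.logb 2 N ≤ (m:ℝ) * lgc
        - ((m:ℝ) * binent ((km:ℝ)/m) - Real.logb 2 (m+1))
        - (km:ℝ) * lga1 - ((m:ℝ) - km) * lga0 := by
      have := hBeq ▸ hlogNB
      linarith [hent]
    calc Real.logb 2 N / ((m:ℝ) * L)
        ≤ ((m:ℝ) * lgc - ((m:ℝ) * binent ((km:ℝ)/m) - Real.logb 2 (m+1))
            - (km:ℝ) * lga1 - ((m:ℝ) - km) * lga0) / ((m:ℝ) * L) := by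
          gcongr
      _ = G m := by
          rw [hG_def]
          field_simp
          ring
  -- Step 2 : limits
  have hT1 : Tendsto (fun m : ℕ => (kf m : ℝ)/m) atTop (nhds be) := by
    have hlow : Tendsto (fun m : ℕ => be - 3/(m:ℝ)) atTop (nhds be) := by
      have h := Tendsto.const_sub be (tendsto_const_div_atTop_nhds_zero_nat 3)
      simpa using h
    apply tendsto_of_tendsto_of_tendsto_of_le_of_le' hlow tendsto_const_nhds
    · filter_upwards [hev2] with m hm
      obtain ⟨hm2, hm1⟩ := hm
      have hmR : (0:ℝ) < m := by exact_mod_cast hm1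
      have h3 : (kf m:ℝ) = (⌊be * (m:ℝ)⌋₊ : ℝ) - 2 := by
        rw [hkf_def]; push_cast [Nat.cast_sub hm2]; ring
      have h4 : be * m - 1 < (⌊be * (m:ℝ)⌋₊ : ℝ) := Nat.sub_one_lt_floor _
      rw [le_div_iff₀ hmR]
      have h5 : (be - 3/(m:ℝ)) * m = be * m - 3 := by field_simp
      rw [h5]
      linarith
    · filter_upwards [hev2] with m hm
      obtain ⟨hm2, hm1⟩ := hm
      have hmR : (0:ℝ) < m := by exact_mod_cast hm1
      have h3 : (kf m:ℝ) ≤ be * m := by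
        have h5 : (kf m:ℝ) = (⌊be * (m:ℝ)⌋₊ : ℝ) - 2 := by
          rw [hkf_def]; push_cast [Nat.cast_sub hm2]; ring
        have := Nat.floor_le (show (0:ℝ) ≤ be * m by positivity)
        linarith
      rw [div_le_iff₀ hmR]
      linarith [mul_comm be (m:ℝ)]
  have hT3 : Tendsto (fun m : ℕ => Real.logb 2 (m+1)/m) atTop (nhds 0) :=
    tendsto_logb_succ_div
  have hT4 : Tendsto (fun m : ℕ => ((m:ℝ) - kf m)/m) atTop (nhds (1 - be)) := by
    have h1 : Tendsto (fun m : ℕ => 1 - (kf m:ℝ)/m) atTop (nhds (1 - be)) :=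
      tendsto_const_nhds.sub hT1
    apply h1.congr'
    filter_upwards [eventually_ge_atTop 1] with m hm
    have hmne : (m:ℝ) ≠ 0 := by
      have : (0:ℝ) < m := by exact_mod_cast hm
      exact ne_of_gt this
    field_simp
  have hG_lim : Tendsto G atTop (nhds ((1/(L:ℝ)) * lgc - (1/(L:ℝ)) * binent be
      + (1/(L:ℝ)) * 0 - (1/(L:ℝ)) * ((1 - be) * lga0)
      - (1/(L:ℝ)) * (be * lga1))) := by
    rw [hG_def]
    exact (((tendsto_const_nhds.sub
      (((binent_continuous.tendsto be).comp hT1).const_mul (1/(L:ℝ)))).add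
      (hT3.const_mul (1/(L:ℝ)))).sub
      ((hT4.mul_const lga0).const_mul (1/(L:ℝ)))).sub
      ((hT1.mul_const lga1).const_mul (1/(L:ℝ)))
  set RHSval : ℝ := (1/(L:ℝ)) * lgc - (1/(L:ℝ)) * binent be
      - (1/(L:ℝ)) * (al * lga0) - (1/(L:ℝ)) * (be * lga1) with hRHSval_def
  have hG_lim' : Tendsto G atTop (nhds RHSval) := by
    have heq : (1/(L:ℝ)) * lgc - (1/(L:ℝ)) * binent be + (1/(L:ℝ)) * 0
        - (1/(L:ℝ)) * ((1 - be) * lga0) - (1/(L:ℝ)) * (be * lga1) = RHSval := by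
      rw [hRHSval_def, hbal]; ring
    rw [heq] at hG_lim
    exact hG_lim
  -- Step 3 : limsup
  have hcob : Filter.IsCoboundedUnder (· ≤ ·) atTop
      (fun m : ℕ => Real.logb 2 (maxCSCC m L ⌊(m:ℝ) * L * δ⌋₊ w) / ((m:ℝ) * L)) := by
    apply Filter.IsCoboundedUnder.of_frequently_ge (a := 0)
    apply Filter.Frequently.of_forall
    intro m
    exact div_nonneg (logb_nat_nonneg _) (by positivity)
  have hlimsup : gammaRate L δ w ≤ RHSval := by
    rw [gammaRate]
    calc Filter.limsup (fun m : ℕ =>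
        Real.logb 2 (maxCSCC m L ⌊(m:ℝ) * L * δ⌋₊ w) / ((m:ℝ) * L)) atTop
        ≤ Filter.limsup G atTop :=
          Filter.limsup_le_limsup hfG hcob hG_lim'.isBoundedUnder_le
      _ = RHSval := hG_lim'.limsup_eq
  refine le_trans hlimsup (le_of_eq ?_)
  -- Step 4 : identify RHS
  have hlga1' : lga1 = Real.logb 2 (w.choose u1) + Real.logb 2 ((L-w).choose u1) := by
    have hc1 : ((w.choose u1 : ℕ):ℝ) ≠ 0 := by
      have := Nat.choose_pos hu1w; positivity
    have hc2 : (((L-w).choose u1 : ℕ):ℝ) ≠ 0 := by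
      have := Nat.choose_pos hu1Lw; positivity
    rw [hlga1_def, ha1_def]
    push_cast
    rw [Real.logb_mul hc1 hc2]
  have hlga0' : lga0 = Real.logb 2 (w.choose v0) + Real.logb 2 ((L-w).choose v0) := by
    have hc1 : ((w.choose v0 : ℕ):ℝ) ≠ 0 := by
      have := Nat.choose_pos hv0w; positivity
    have hc2 : (((L-w).choose v0 : ℕ):ℝ) ≠ 0 := by
      have := Nat.choose_pos hv0Lw; positivity
    rw [hlga0_def, ha0_def]
    push_cast
    rw [Real.logb_mul hc1 hc2]
  have hbinent : binent be = binent al := by rw [hbal]; exact binent_one_sub al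
  rw [hRHSval_def, hbinent, hlga1', hlga0']
  by_cases hint : (u1:ℝ) = ut
  · have hal_eq : al = 0 := by rw [hal_def, hint]; ring
    rw [hal_eq]
    ring
  · have hlt : ut < (u1:ℝ) := lt_of_le_of_ne (by rw [hu1_def]; exact Nat.le_ceil ut)
      (Ne.symm hint)
    have hfl : ⌊ut⌋₊ = v0 := by
      have h1 : u1 ≤ ⌊ut⌋₊ + 1 := by rw [hu1_def]; exact Nat.ceil_le_floor_add_one ut
      have h2 : (⌊ut⌋₊:ℝ) < (u1:ℝ) := lt_of_le_of_lt (Nat.floor_le (le_of_lt hut0)) hlt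
      have h3 : ⌊ut⌋₊ < u1 := by exact_mod_cast h2
      omega
    rw [hfl]
    ring
end
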